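/- arXiv:2107.10781 — 7 statements merged into one kernel-verified Lean document; each statement's English description precedes it below -/
import Mathlib

section
/- Let G be a finite simple graph on a vertex type V with n = |V|, and let A be its adjacency matrix over ℤ. For every natural number d with 0 ≤ d ≤ n, the coefficient of λ^{n-d} in the characteristic polynomial det(λI − A) of A equals the sum, over all elementary edge-subsets E' of G covering exactly d vertices, of (−1)^{c(E')} · 2^{z(E')}, where c(E') is the number of connected components of the graph spanned by E' that contain an edge, and z(E') is the number of such components in which every covered vertex has degree 2 (i.e., the number of cycle components). -/
open scoped Classical

/-- The simple graph spanned by a finite set of edges. -/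
noncomputable def spanGraph {V : Type*} (E' : Finset (Sym2 V)) : SimpleGraph V :=
  SimpleGraph.fromEdgeSet (E' : Set (Sym2 V))

/-- A finite set of edges is *elementary* if in the graph it spans, every covered vertex
has degree 1 or 2, and every vertex of degree 1 has its (unique) neighbor also of
degree 1; equivalently, every component of the spanned graph containing an edge is a
single edge or a cycle. -/
noncomputable def IsElementary {V : Type*} [Fintype V] (E' : Finset (Sym2 V)) : Prop :=
  (∀ v ∈ (spanGraph E').support,
      (spanGraph E').degree v = 1 ∨ (spanGraph E').degree v = 2) ∧
  ∀ v w : V, (spanGraph E').degree v = 1 → (spanGraph E').Adj v w →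
      (spanGraph E').degree w = 1

/-- The number of connected components of the graph spanned by `E'` that contain an
edge. -/
noncomputable def numEdgeComponents {V : Type*} [Fintype V] (E' : Finset (Sym2 V)) : ℕ :=
  Nat.card {C : (spanGraph E').ConnectedComponent //
    ∃ v w, (spanGraph E').Adj v w ∧ (spanGraph E').connectedComponentMk v = C}

/-- The number of connected components of the graph spanned by `E'` that contain an
edge and in which every vertex has degree 2, i.e. the number of cycle components. -/
noncomputable def numCycleComponents {V : Type*} [Fintype V] (E' : Finset (Sym2 V)) : ℕ :=
  Nat.card {C : (spanGraph E').ConnectedComponent //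
    (∃ v w, (spanGraph E').Adj v w ∧ (spanGraph E').connectedComponentMk v = C) ∧
    ∀ v, (spanGraph E').connectedComponentMk v = C → (spanGraph E').degree v = 2}

set_option linter.unusedSectionVars false
set_option maxHeartbeats 1000000

theorem Equiv.Perm.apply_inv_self {α : Type*} (f : Equiv.Perm α) (x : α) : f (f⁻¹ x) = x :=
  f.apply_symm_apply x

theorem Equiv.Perm.inv_apply_self {α : Type*} (f : Equiv.Perm α) (x : α) : f⁻¹ (f x) = x :=
  f.symm_apply_apply x

theorem Equiv.Perm.not_mem_support {α : Type*} [DecidableEq α] [Fintype α] {f : Equiv.Perm α}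
    {x : α} : x ∉ f.support ↔ f x = x :=
  Equiv.Perm.notMem_support

namespace HS
section Helpers
variable {V : Type*}

lemma walk_closed {H : SimpleGraph V} {A : Set V}
    (hA : ∀ ⦃x y⦄, x ∈ A → H.Adj x y → y ∈ A) :
    ∀ {x y : V}, H.Walk x y → x ∈ A → y ∈ A := by
  intro x y p
  induction p with
  | nil => exact id
  | cons h p ih => exact fun hx => ih (hA hx h)

lemma reachable_closed {H : SimpleGraph V} {A : Set V}
    (hA : ∀ ⦃x y⦄, x ∈ A → H.Adj x y → y ∈ A) {x y : V}
    (h : H.Reachable x y) (hx : x ∈ A) : y ∈ A := by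
  obtain ⟨p⟩ := h
  exact walk_closed hA p hx

lemma nat_card_eq_of_surjections {α β γ : Type*} (f : α → β) (g : α → γ)
    (hf : Function.Surjective f) (hg : Function.Surjective g)
    (h : ∀ a b, f a = f b ↔ g a = g b) : Nat.card β = Nat.card γ := by
  cases isEmpty_or_nonempty α with
  | inl hemp =>
    have hb : IsEmpty β := ⟨fun b => (hf b).elim fun a _ => isEmptyElim a⟩
    have hc : IsEmpty γ := ⟨fun c => (hg c).elim fun a _ => isEmptyElim a⟩
    rw [Nat.card_of_isEmpty, Nat.card_of_isEmpty]
  | inr hne =>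
    refine Nat.card_eq_of_bijective (fun b => g (Function.surjInv hf b)) ⟨?_, ?_⟩
    · intro b1 b2 hb
      have := (h _ _).2 hb
      rwa [Function.surjInv_eq hf, Function.surjInv_eq hf] at this
    · intro c
      obtain ⟨a, rfl⟩ := hg c
      exact ⟨f a, (h _ _).1 (Function.surjInv_eq hf _)⟩
end Helpers

section PartA
open Finset Polynomial

variable {V : Type*} [Fintype V] [DecidableEq V]

lemma partA (G : SimpleGraph V) [DecidableRel G.Adj] (d : ℕ) (hd : d ≤ Fintype.card V) :
    (Matrix.charpoly (G.adjMatrix ℤ)).coeff (Fintype.card V - d) =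
    ∑ σ ∈ Finset.univ.filter
        (fun σ : Equiv.Perm V => σ.support.card = d ∧ ∀ i ∈ σ.support, G.Adj (σ i) i),
      (-1 : ℤ) ^ d * (Equiv.Perm.sign σ : ℤ) := by
  classical
  rw [Matrix.charpoly, Matrix.det_apply, Polynomial.finset_sum_coeff, Finset.sum_filter]
  refine Finset.sum_congr rfl fun σ _ => ?_
  have hsle : σ.support.card ≤ Fintype.card V := Finset.card_le_univ _
  have hprod : (∏ i, (Matrix.charmatrix (G.adjMatrix ℤ)) (σ i) i) =
      Polynomial.C (∏ i ∈ σ.support, (-(G.adjMatrix ℤ (σ i) i))) *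
        Polynomial.X ^ (Fintype.card V - σ.support.card) := by
    rw [← Finset.prod_mul_prod_compl σ.support]
    congr 1
    · rw [map_prod]
      refine Finset.prod_congr rfl fun i hi => ?_
      rw [Matrix.charmatrix_apply_ne _ _ _ (Equiv.Perm.mem_support.1 hi), map_neg]
    · rw [← Finset.card_compl, Finset.prod_congr rfl (fun i hi => ?_), Finset.prod_const]
      have hfix : σ i = i := by
        have := Finset.mem_compl.1 hi
        simpa [Equiv.Perm.mem_support, not_not] using this
      rw [hfix, Matrix.charmatrix_apply_eq]
      simp
  rw [Polynomial.coeff_smul, hprod, Polynomial.coeff_C_mul, Polynomial.coeff_X_pow]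
  by_cases hsd : σ.support.card = d
  · subst hsd
    simp only [if_pos rfl, true_and, mul_one]
    have hA : ∀ i ∈ σ.support, G.adjMatrix ℤ (σ i) i = if G.Adj (σ i) i then 1 else 0 :=
      fun i _ => by simp [SimpleGraph.adjMatrix_apply]
    rw [Finset.prod_congr rfl fun i hi => by rw [hA i hi, ← neg_one_mul],
      Finset.prod_mul_distrib, Finset.prod_const, Finset.prod_boole]
    by_cases hall : ∀ i ∈ σ.support, G.Adj (σ i) i
    · rw [if_pos hall, if_pos hall, mul_one]
      simp [Units.smul_def, mul_comm]
    · rw [if_neg hall, if_neg hall]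
      simp
  · have : Fintype.card V - d ≠ Fintype.card V - σ.support.card := by omega
    rw [if_neg this, if_neg (fun h => hsd h.1)]
    simp
end PartA

section PartB
open Finset SimpleGraph Equiv

variable {V : Type*} [Fintype V] [DecidableEq V]

lemma spanGraph_adj (E' : Finset (Sym2 V)) {v w : V} :
    (spanGraph E').Adj v w ↔ s(v, w) ∈ E' ∧ v ≠ w := by
  simp [spanGraph, SimpleGraph.fromEdgeSet_adj]

noncomputable def es (σ : Equiv.Perm V) : Finset (Sym2 V) :=
  σ.support.image fun i => s(i, σ i)

lemma es_adj (σ : Equiv.Perm V) {v w : V} :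
    (spanGraph (es σ)).Adj v w ↔ (v ∈ σ.support ∧ w = σ v) ∨ (w ∈ σ.support ∧ v = σ w) := by
  rw [spanGraph_adj, es]
  constructor
  · rintro ⟨he, hne⟩
    simp only [Finset.mem_coe, Finset.mem_image] at he
    obtain ⟨i, hi, hsy⟩ := he
    rw [Sym2.eq_iff] at hsy
    rcases hsy with ⟨rfl, rfl⟩ | ⟨rfl, rfl⟩
    · exact Or.inl ⟨hi, rfl⟩
    · exact Or.inr ⟨hi, rfl⟩
  · rintro (⟨hv, rfl⟩ | ⟨hw, rfl⟩)
    · exact ⟨Finset.mem_coe.2 (Finset.mem_image.2 ⟨v, hv, rfl⟩),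
        Ne.symm (Equiv.Perm.mem_support.1 hv)⟩
    · refine ⟨Finset.mem_coe.2 (Finset.mem_image.2 ⟨w, hw, ?_⟩), Equiv.Perm.mem_support.1 hw⟩
      exact Sym2.eq_swap
 
lemma es_support (σ : Equiv.Perm V) : (spanGraph (es σ)).support = ↑σ.support := by
  ext v
  simp only [SimpleGraph.mem_support, es_adj, Finset.mem_coe]
  constructor
  · rintro ⟨w, ⟨hv, _⟩ | ⟨hw, rfl⟩⟩
    · exact hv
    · exact Equiv.Perm.apply_mem_support.2 hw
  · intro hv
    exact ⟨σ v, Or.inl ⟨hv, rfl⟩⟩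

lemma es_neighborFinset (σ : Equiv.Perm V) {v : V} (hv : v ∈ σ.support) :
    (spanGraph (es σ)).neighborFinset v = {σ v, σ⁻¹ v} := by
  ext w
  rw [SimpleGraph.mem_neighborFinset, es_adj]
  simp only [Finset.mem_insert, Finset.mem_singleton]
  constructor
  · rintro (⟨_, rfl⟩ | ⟨hw, rfl⟩)
    · exact Or.inl rfl
    · exact Or.inr (by simp)
  · rintro (rfl | rfl)
    · exact Or.inl ⟨hv, rfl⟩
    · refine Or.inr ⟨?_, by simp⟩
      rw [← Equiv.Perm.support_inv]
      exact Equiv.Perm.apply_mem_support.2 (by rwa [Equiv.Perm.support_inv])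

lemma es_degree (σ : Equiv.Perm V) {v : V} (hv : v ∈ σ.support) :
    (spanGraph (es σ)).degree v = if σ v = σ⁻¹ v then 1 else 2 := by
  rw [SimpleGraph.degree, es_neighborFinset σ hv]
  by_cases h : σ v = σ⁻¹ v
  · simp [h]
  · rw [if_neg h, Finset.card_pair h]

lemma two_cycle_iff (σ : Equiv.Perm V) {v : V} :
    σ v = σ⁻¹ v ↔ σ (σ v) = v := by
  constructor
  · intro h; rw [h]; simp
  · intro h
    have := congrArg (fun x => σ⁻¹ x) h
    simpa using this

lemma isElementary_es (σ : Equiv.Perm V) : IsElementary (es σ) := by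
  constructor
  · intro v hv
    rw [es_support] at hv
    rw [es_degree σ hv]
    split <;> simp
  · intro v w h1 hadj
    have hv : v ∈ σ.support := by
      have : v ∈ (spanGraph (es σ)).support := ⟨w, hadj⟩
      rwa [es_support] at this
    have h2 : σ v = σ⁻¹ v := by
      by_contra h
      rw [es_degree σ hv, if_neg h] at h1
      omega
    have hw : w = σ v := by
      rcases (es_adj σ).1 hadj with ⟨_, rfl⟩ | ⟨_, rfl⟩
      · rfl
      · rw [h2]; simp
    subst hw
    have hwv : σ (σ v) = v := (two_cycle_iff σ).1 h2
    have hsw : σ v ∈ σ.support := Equiv.Perm.apply_mem_support.2 hv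
    rw [es_degree σ hsw, if_pos]
    exact (two_cycle_iff σ).2 (by rw [hwv])

lemma card_covered_es (σ : Equiv.Perm V) :
    Nat.card {v : V // ∃ e ∈ es σ, v ∈ e} = σ.support.card := by
  have hset : ∀ v : V, (∃ e ∈ es σ, v ∈ e) ↔ v ∈ σ.support := by
    intro v
    constructor
    · rintro ⟨e, he, hve⟩
      rw [es, Finset.mem_image] at he
      obtain ⟨i, hi, rfl⟩ := he
      rcases Sym2.mem_iff.1 hve with rfl | rfl
      · exact hi
      · exact Equiv.Perm.apply_mem_support.2 hi
    · intro hv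
      exact ⟨s(v, σ v), Finset.mem_image.2 ⟨v, hv, rfl⟩, Sym2.mem_iff.2 (Or.inl rfl)⟩
  rw [Nat.card_congr (Equiv.subtypeEquivRight hset), Nat.card_eq_fintype_card]
  exact Fintype.card_coe _

lemma es_subset_edgeFinset (G : SimpleGraph V) [DecidableRel G.Adj] (σ : Equiv.Perm V)
    (h : ∀ i ∈ σ.support, G.Adj (σ i) i) : es σ ⊆ G.edgeFinset := by
  intro e he
  rw [es, Finset.mem_image] at he
  obtain ⟨i, hi, rfl⟩ := he
  rw [SimpleGraph.mem_edgeFinset, SimpleGraph.mem_edgeSet]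
  exact (h i hi).symm

end PartB

section PartB2
open Finset SimpleGraph Equiv

variable {V : Type*} [Fintype V] [DecidableEq V]

lemma reachable_pow (σ : Equiv.Perm V) {v : V} (hv : v ∈ σ.support) (i : ℕ) :
    (spanGraph (es σ)).Reachable v ((σ ^ i) v) := by
  induction i with
  | zero => simpa using SimpleGraph.Reachable.refl v
  | succ n ih =>
    have hn : (σ ^ n) v ∈ σ.support := Equiv.Perm.pow_apply_mem_support.2 hv
    have hstep : (spanGraph (es σ)).Adj ((σ ^ n) v) (σ ((σ ^ n) v)) :=
      (es_adj σ).2 (Or.inl ⟨hn, rfl⟩)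
    have heq : (σ ^ (n + 1)) v = σ ((σ ^ n) v) := by
      rw [pow_succ']; rfl
    rw [heq]
    exact ih.trans hstep.reachable

lemma reachable_of_sameCycle (σ : Equiv.Perm V) {v w : V} (hv : v ∈ σ.support)
    (h : σ.SameCycle v w) : (spanGraph (es σ)).Reachable v w := by
  obtain ⟨i, -, rfl⟩ := h.exists_pow_eq'
  exact reachable_pow σ hv i

lemma sameCycle_of_reachable (σ : Equiv.Perm V) {v w : V}
    (h : (spanGraph (es σ)).Reachable v w) : σ.SameCycle v w := by
  obtain ⟨p⟩ := h
  induction p with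
  | nil => exact Equiv.Perm.SameCycle.refl σ _
  | cons hadj p ih =>
    refine Equiv.Perm.SameCycle.trans ?_ ih
    rcases (es_adj σ).1 hadj with ⟨_, rfl⟩ | ⟨_, rfl⟩
    · exact ⟨1, by simp⟩
    · exact Equiv.Perm.SameCycle.symm ⟨1, by simp⟩

lemma numEdgeComponents_es (σ : Equiv.Perm V) :
    numEdgeComponents (es σ) = σ.cycleFactorsFinset.card := by
  have hcard : σ.cycleFactorsFinset.card = Nat.card σ.cycleFactorsFinset := by
    rw [Nat.card_eq_fintype_card, Fintype.card_coe]
  rw [numEdgeComponents, hcard]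
  refine nat_card_eq_of_surjections
    (f := fun (v : {v : V // v ∈ σ.support}) =>
      (⟨(spanGraph (es σ)).connectedComponentMk v.1,
        v.1, σ v.1, (es_adj σ).2 (Or.inl ⟨v.2, rfl⟩), rfl⟩ :
        {C : (spanGraph (es σ)).ConnectedComponent // ∃ a b, (spanGraph (es σ)).Adj a b ∧
          (spanGraph (es σ)).connectedComponentMk a = C}))
    (g := fun v => (⟨σ.cycleOf v.1,
        Equiv.Perm.cycleOf_mem_cycleFactorsFinset_iff.2 v.2⟩ : σ.cycleFactorsFinset))
    ?_ ?_ ?_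
  · rintro ⟨C, a, b, hadj, rfl⟩
    have ha : a ∈ σ.support := by
      have : a ∈ (spanGraph (es σ)).support := ⟨b, hadj⟩
      rwa [es_support, Finset.mem_coe] at this
    exact ⟨⟨a, ha⟩, Subtype.ext rfl⟩
  · rintro ⟨c, hc⟩
    have hcyc := Equiv.Perm.mem_cycleFactorsFinset_iff.1 hc
    obtain ⟨x, hx, -⟩ := hcyc.1
    have hxsupp : x ∈ c.support := Equiv.Perm.mem_support.2 hx
    have hxσ : x ∈ σ.support := Equiv.Perm.mem_support.2 (by rw [← hcyc.2 x hxsupp]; exact hx)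
    exact ⟨⟨x, hxσ⟩, Subtype.ext (Equiv.Perm.cycle_is_cycleOf hxsupp hc).symm⟩
  · rintro ⟨a, ha⟩ ⟨b, hb⟩
    simp only [Subtype.mk.injEq]
    rw [SimpleGraph.ConnectedComponent.eq]
    constructor
    · intro hr
      exact Equiv.Perm.SameCycle.cycleOf_eq (sameCycle_of_reachable σ hr)
    · intro hco
      refine reachable_of_sameCycle σ ha ?_
      have hmem : a ∈ (σ.cycleOf b).support := by
        rw [← hco, Equiv.Perm.mem_support_cycleOf_iff]
        exact ⟨Equiv.Perm.SameCycle.refl _ _, ha⟩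
      exact ((Equiv.Perm.mem_support_cycleOf_iff.1 hmem).1).symm

lemma sign_es (σ : Equiv.Perm V) :
    (Equiv.Perm.sign σ : ℤ) = (-1) ^ (σ.support.card + numEdgeComponents (es σ)) := by
  rw [numEdgeComponents_es]
  have hs := Equiv.Perm.sign_of_cycleType σ
  rw [Equiv.Perm.sum_cycleType] at hs
  have hlen : Multiset.card σ.cycleType = σ.cycleFactorsFinset.card := by
    rw [Equiv.Perm.cycleType]
    simp
  rw [hlen] at hs
  rw [hs]
  push_cast
  rfl

end PartB2

universe u

section Rotation
variable {V : Type u}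

lemma closed_eq_univ {H : SimpleGraph V} (hconn : H.Connected) {A : Set V}
    (hA : ∀ ⦃x y⦄, x ∈ A → H.Adj x y → y ∈ A) {x : V} (hx : x ∈ A) : ∀ y, y ∈ A := by
  intro y
  obtain ⟨p⟩ := hconn.preconnected x y
  exact walk_closed hA p hx

/-- transfer of connectivity through smoothing a degree-2 vertex `v` with neighbors `a b` -/
lemma smooth_reachable {H : SimpleGraph V} {v a b : V}
    (hN : ∀ w, H.Adj v w ↔ w = a ∨ w = b)
    {H' : SimpleGraph {x : V // x ≠ v}}
    (hH' : ∀ x y : {x : V // x ≠ v}, H.Adj x.1 y.1 → H'.Adj x y)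
    (hab : ∀ x y : {x : V // x ≠ v}, x.1 = a ∧ y.1 = b ∨ x.1 = b ∧ y.1 = a → H'.Adj x y) :
    ∀ (m : ℕ) {x y : V} (p : H.Walk x y), p.length ≤ m → (hx : x ≠ v) → (hy : y ≠ v) →
      H'.Reachable ⟨x, hx⟩ ⟨y, hy⟩ := by
  intro m
  induction m with
  | zero =>
    intro x y p hl hx hy
    cases p with
    | nil => exact SimpleGraph.Reachable.refl _
    | cons h q => simp [SimpleGraph.Walk.length_cons] at hl
  | succ n ih =>
    intro x y p hl hx hy
    cases p with
    | nil => exact SimpleGraph.Reachable.refl _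
    | @cons _ z _ h q =>
      by_cases hz : z = v
      · subst hz
        cases q with
        | nil => exact absurd rfl hy
        | @cons _ u _ h2 r =>
          have hu := h2.ne'
          have hxab : x = a ∨ x = b := (hN x).1 h.symm
          have huab : u = a ∨ u = b := (hN u).1 h2
          have hxu : H'.Reachable ⟨x, hx⟩ ⟨u, hu⟩ := by
            by_cases hequ : x = u
            · subst hequ; exact SimpleGraph.Reachable.refl _
            · refine (hab ⟨x, hx⟩ ⟨u, hu⟩ ?_).reachable
              rcases hxab with rfl | rfl <;> rcases huab with h3 | h3
              · exact absurd h3.symm hequ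
              · exact Or.inl ⟨rfl, h3⟩
              · exact Or.inr ⟨rfl, h3⟩
              · exact absurd h3.symm hequ
          have hr : r.length ≤ n := by
            simp [SimpleGraph.Walk.length_cons] at hl; omega
          exact hxu.trans (ih r hr hu hy)
      · have hq : q.length ≤ n := by
          simp [SimpleGraph.Walk.length_cons] at hl; omega
        exact ((hH' ⟨x, hx⟩ ⟨z, hz⟩ h).reachable).trans (ih q hq hz hy)

lemma rotation_exists : ∀ (n : ℕ) (W : Type u) (_ : Fintype W) (H : SimpleGraph W),
    Fintype.card W ≤ n → H.Connected →
    (∀ v : W, ∃ a b : W, a ≠ b ∧ ∀ w, H.Adj v w ↔ w = a ∨ w = b) →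
    ∃ g : Equiv.Perm W, (∀ v, H.Adj v (g v)) ∧ ∀ v, g (g v) ≠ v := by
  intro n
  induction n with
  | zero =>
    intro W instF H hcard hconn _
    obtain ⟨v⟩ := hconn.nonempty
    have : 0 < Fintype.card W := @Fintype.card_pos W instF ⟨v⟩
    omega
  | succ n ih =>
    intro W instF H hcard hconn htwo
    obtain ⟨v⟩ := hconn.nonempty
    obtain ⟨a, b, hab, hN⟩ := htwo v
    have hva : H.Adj v a := (hN a).2 (Or.inl rfl)
    have hvb : H.Adj v b := (hN b).2 (Or.inr rfl)
    have hav : a ≠ v := hva.ne'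
    have hbv : b ≠ v := hvb.ne'
    by_cases hadjab : H.Adj a b
    · -- triangle case
      have hNa : ∀ w, H.Adj a w ↔ w = v ∨ w = b := by
        obtain ⟨x1, x2, hx12, hNa⟩ := htwo a
        have hv' := (hNa v).1 hva.symm
        have hb' := (hNa b).1 hadjab
        intro w
        rw [hNa w]
        rcases hv' with rfl | rfl <;> rcases hb' with rfl | rfl <;> tauto
      have hNb : ∀ w, H.Adj b w ↔ w = v ∨ w = a := by
        obtain ⟨x1, x2, hx12, hNb⟩ := htwo b
        have hv' := (hNb v).1 hvb.symm
        have hb' := (hNb a).1 hadjab.symm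
        intro w
        rw [hNb w]
        rcases hv' with rfl | rfl <;> rcases hb' with rfl | rfl <;> tauto
      have huniv : ∀ u : W, u ∈ ({v, a, b} : Set W) := by
        refine closed_eq_univ hconn ?_ (by simp : v ∈ ({v, a, b} : Set W))
        rintro x y hx hxy
        simp only [Set.mem_insert_iff, Set.mem_singleton_iff] at hx ⊢
        rcases hx with rfl | rfl | rfl
        · rcases (hN y).1 hxy with rfl | rfl <;> tauto
        · rcases (hNa y).1 hxy with rfl | rfl <;> tauto
        · rcases (hNb y).1 hxy with rfl | rfl <;> tauto
      have hvapp : v ≠ a := fun h => hav h.symm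
      have hvb' : v ≠ b := fun h => hbv h.symm
      refine ⟨⟨fun x => if x = v then a else if x = a then b else if x = b then v else x,
              fun x => if x = a then v else if x = b then a else if x = v then b else x,
              ?_, ?_⟩, ?_, ?_⟩
      · intro x
        rcases huniv x with rfl | rfl | rfl <;>
          simp [hav, hbv, hab, hab.symm, hvapp, hvb']
      · intro x
        rcases huniv x with rfl | rfl | rfl <;>
          simp [hav, hbv, hab, hab.symm, hvapp, hvb']
      · intro x
        rcases huniv x with rfl | rfl | rfl <;>
          simp [hav, hbv, hab, hab.symm, hvapp, hvb', hva, hadjab, hvb.symm]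
      · intro x
        rcases huniv x with rfl | rfl | rfl <;>
          simp [hav, hbv, hab, hab.symm, hvapp, hvb']
    · -- smoothing case
      have hvne : ∀ x : W, H.Adj v x → x ≠ v := fun x h => h.ne'
      let H' : SimpleGraph {x : W // x ≠ v} :=
        { Adj := fun x y => H.Adj x.1 y.1 ∨ (x.1 = a ∧ y.1 = b) ∨ (x.1 = b ∧ y.1 = a)
          symm := by
            refine ⟨?_⟩; rintro x y (h | ⟨h1, h2⟩ | ⟨h1, h2⟩)
            · exact Or.inl h.symm
            · exact Or.inr (Or.inr ⟨h2, h1⟩)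
            · exact Or.inr (Or.inl ⟨h2, h1⟩)
          loopless := by
            refine ⟨?_⟩; rintro x (h | ⟨h1, h2⟩ | ⟨h1, h2⟩)
            · exact H.irrefl h
            · exact hab (h1.symm.trans h2)
            · exact hab (h2.symm.trans h1) }
      have hH'adj : ∀ x y : {x : W // x ≠ v}, H'.Adj x y ↔
          (H.Adj x.1 y.1 ∨ (x.1 = a ∧ y.1 = b) ∨ (x.1 = b ∧ y.1 = a)) := fun _ _ => Iff.rfl
      have hcard' : Fintype.card {x : W // x ≠ v} ≤ n := by
        have hlt : Fintype.card {x : W // x ≠ v} < Fintype.card W := by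
          apply Fintype.card_subtype_lt (x := v); simp
        omega
      have hother : ∀ (x y : W), H.Adj x y → ∃ z, z ≠ y ∧ ∀ w, H.Adj x w ↔ w = y ∨ w = z := by
        intro x y hxy
        obtain ⟨x1, x2, hx12, hNx⟩ := htwo x
        rcases (hNx y).1 hxy with rfl | rfl
        · exact ⟨x2, hx12.symm, fun w => hNx w⟩
        · exact ⟨x1, hx12, fun w => (hNx w).trans or_comm⟩
      obtain ⟨a2, ha2v', hNa⟩ := hother a v hva.symm
      obtain ⟨b2, hb2v', hNb⟩ := hother b v hvb.symm
      have hAa2 : H.Adj a a2 := (hNa a2).2 (Or.inr rfl)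
      have ha2b : a2 ≠ b := fun h => hadjab (h ▸ hAa2)
      have hAb2 : H.Adj b b2 := (hNb b2).2 (Or.inr rfl)
      have hb2a : b2 ≠ a := fun h => hadjab ((h ▸ hAb2).symm)
      have htwo' : ∀ x : {x : W // x ≠ v}, ∃ p q : {x : W // x ≠ v}, p ≠ q ∧
          ∀ y, H'.Adj x y ↔ y = p ∨ y = q := by
        rintro ⟨x, hxv⟩
        by_cases hxa : x = a
        · subst hxa
          refine ⟨⟨a2, ha2v'⟩, ⟨b, hbv⟩, fun hc => ha2b (congrArg Subtype.val hc), ?_⟩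
          rintro ⟨y, hyv⟩
          rw [hH'adj]
          constructor
          · rintro (h | ⟨_, rfl⟩ | ⟨h1, _⟩)
            · rcases (hNa y).1 h with rfl | rfl
              · exact absurd rfl hyv
              · exact Or.inl (Subtype.ext rfl)
            · exact Or.inr (Subtype.ext rfl)
            · exact absurd h1 hab
          · rintro (h | h) <;> rw [Subtype.mk.injEq] at h <;> subst h
            · exact Or.inl hAa2
            · exact Or.inr (Or.inl ⟨rfl, rfl⟩)
        · by_cases hxb : x = b
          · subst hxb
            refine ⟨⟨b2, hb2v'⟩, ⟨a, hav⟩, fun hc => hb2a (congrArg Subtype.val hc), ?_⟩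
            rintro ⟨y, hyv⟩
            rw [hH'adj]
            constructor
            · rintro (h | ⟨h1, _⟩ | ⟨_, rfl⟩)
              · rcases (hNb y).1 h with rfl | rfl
                · exact absurd rfl hyv
                · exact Or.inl (Subtype.ext rfl)
              · exact absurd h1 (fun hc => hab hc.symm)
              · exact Or.inr (Subtype.ext rfl)
            · rintro (h | h) <;> rw [Subtype.mk.injEq] at h <;> subst h
              · exact Or.inl hAb2
              · exact Or.inr (Or.inr ⟨rfl, rfl⟩)
          · obtain ⟨y1, y2, hy12, hNx⟩ := htwo x
            have hy1v : y1 ≠ v := by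
              intro hc
              have hadjx : H.Adj x y1 := (hNx y1).2 (Or.inl rfl)
              rw [hc] at hadjx
              rcases (hN x).1 hadjx.symm with h | h
              · exact hxa h
              · exact hxb h
            have hy2v : y2 ≠ v := by
              intro hc
              have hadjx : H.Adj x y2 := (hNx y2).2 (Or.inr rfl)
              rw [hc] at hadjx
              rcases (hN x).1 hadjx.symm with h | h
              · exact hxa h
              · exact hxb h
            refine ⟨⟨y1, hy1v⟩, ⟨y2, hy2v⟩, fun hc => hy12 (congrArg Subtype.val hc), ?_⟩
            rintro ⟨y, hyv⟩
            rw [hH'adj]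
            constructor
            · rintro (h | ⟨h1, _⟩ | ⟨h1, _⟩)
              · rcases (hNx y).1 h with rfl | rfl
                · exact Or.inl (Subtype.ext rfl)
                · exact Or.inr (Subtype.ext rfl)
              · exact absurd h1 hxa
              · exact absurd h1 hxb
            · rintro (h | h) <;> rw [Subtype.mk.injEq] at h
              · exact Or.inl ((hNx y).2 (Or.inl h))
              · exact Or.inl ((hNx y).2 (Or.inr h))
      have hconn' : H'.Connected := by
        have hne : Nonempty {x : W // x ≠ v} := ⟨⟨a, hav⟩⟩
        refine ⟨fun x y => ?_⟩
        obtain ⟨p⟩ := hconn.preconnected x.1 y.1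
        have := smooth_reachable hN (fun x y h => (hH'adj x y).2 (Or.inl h))
          (fun x y h => (hH'adj x y).2 (Or.inr h)) p.length p le_rfl x.2 y.2
        exact this
      obtain ⟨g', hg'adj, hg'2⟩ := ih {x : W // x ≠ v} (inferInstance) H' hcard' hconn' htwo'
      have hg'inv_adj : ∀ x, H'.Adj x (g'⁻¹ x) := by
        intro x
        have := hg'adj (g'⁻¹ x)
        rw [Equiv.Perm.apply_inv_self] at this
        exact this.symm
      have hg'inv2 : ∀ x, g'⁻¹ (g'⁻¹ x) ≠ x := by
        intro x hc
        have h2 : g' (g' (g'⁻¹ (g'⁻¹ x))) = x := by simp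
        rw [hc] at h2
        exact hg'2 x h2
      have hAB' : H'.Adj ⟨a, hav⟩ ⟨b, hbv⟩ := Or.inr (Or.inl ⟨rfl, rfl⟩)
      have hgne : ∀ x, g' x ≠ g'⁻¹ x := by
        intro x hc
        apply hg'2 x
        rw [hc, Equiv.Perm.apply_inv_self]
      have hBor : g' ⟨a, hav⟩ = ⟨b, hbv⟩ ∨ g'⁻¹ ⟨a, hav⟩ = ⟨b, hbv⟩ := by
        obtain ⟨p, q, hpq, hNA⟩ := htwo' ⟨a, hav⟩
        have h1 := (hNA (g' ⟨a, hav⟩)).1 (hg'adj ⟨a, hav⟩)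
        have h2 := (hNA (g'⁻¹ ⟨a, hav⟩)).1 (hg'inv_adj ⟨a, hav⟩)
        have h3 := (hNA ⟨b, hbv⟩).1 hAB'
        have hne := hgne ⟨a, hav⟩
        rcases h1 with h1 | h1 <;> rcases h2 with h2 | h2 <;> rcases h3 with h3 | h3 <;>
          first
            | (left; rw [h1, ← h3])
            | (right; rw [h2, ← h3])
            | (exact absurd (h1.trans h2.symm) hne)
      obtain ⟨g, hgadj, hg2, hgA⟩ :
          ∃ g : Equiv.Perm {x : W // x ≠ v}, (∀ x, H'.Adj x (g x)) ∧
            (∀ x, g (g x) ≠ x) ∧ g ⟨a, hav⟩ = ⟨b, hbv⟩ := by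
        rcases hBor with h | h
        · exact ⟨g', hg'adj, hg'2, h⟩
        · exact ⟨g'⁻¹, hg'inv_adj, hg'inv2, h⟩
      have hgval_ne_b : ∀ (x : W) (hx : x ≠ v), x ≠ a → (g ⟨x, hx⟩).1 ≠ b := by
        intro x hx hxa hc
        apply hxa
        have : g ⟨x, hx⟩ = g ⟨a, hav⟩ := by rw [hgA]; exact Subtype.ext hc
        have := g.injective this
        exact congrArg Subtype.val this
      have hginvval_ne_a : ∀ (x : W) (hx : x ≠ v), x ≠ b → (g⁻¹ ⟨x, hx⟩).1 ≠ a := by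
        intro x hx hxb hc
        apply hxb
        have h4 : g (g⁻¹ ⟨x, hx⟩) = g ⟨a, hav⟩ := by
          congr 1
          exact Subtype.ext hc
        rw [Equiv.Perm.apply_inv_self, hgA] at h4
        exact congrArg Subtype.val h4
      set F : W → W := fun x => if hxv : x = v then b else if x = a then v else (g ⟨x, hxv⟩).1
        with hFdef
      set Finv : W → W := fun x => if hxv : x = v then a else if x = b then v else (g⁻¹ ⟨x, hxv⟩).1
        with hFinvdef
      have hFv : F v = b := dif_pos rfl
      have hFa : F a = v := by
        show (if hxv : a = v then b else if a = a then v else (g ⟨a, hxv⟩).1) = v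
        simp only [dif_neg hav]
        simp
      have hFo : ∀ (x : W) (h1 : ¬ x = v), x ≠ a → F x = (g ⟨x, h1⟩).1 := by
        intro x h1 h2
        show (if hxv : x = v then b else if x = a then v else (g ⟨x, hxv⟩).1) = _
        simp only [dif_neg h1]
        rw [if_neg h2]
      have hFinvv : Finv v = a := dif_pos rfl
      have hFinvb : Finv b = v := by
        show (if hxv : b = v then a else if b = b then v else (g⁻¹ ⟨b, hxv⟩).1) = v
        simp only [dif_neg hbv]
        simp
      have hFinvo : ∀ (x : W) (h1 : ¬ x = v), x ≠ b → Finv x = (g⁻¹ ⟨x, h1⟩).1 := by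
        intro x h1 h2
        show (if hxv : x = v then a else if x = b then v else (g⁻¹ ⟨x, hxv⟩).1) = _
        simp only [dif_neg h1]
        rw [if_neg h2]
      have heta : ∀ (x : {x : W // x ≠ v}) (h : (x : W) ≠ v), (⟨x.1, h⟩ : {x : W // x ≠ v}) = x :=
        fun x h => Subtype.ext rfl
      refine ⟨⟨F, Finv, ?_, ?_⟩, ?_, ?_⟩
      · -- left inverse
        intro x
        by_cases hxv : x = v
        · subst hxv
          rw [hFv, hFinvb]
        · by_cases hxa : x = a
          · subst hxa
            rw [hFa, hFinvv]
          · rw [hFo x hxv hxa,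
              hFinvo _ (g ⟨x, hxv⟩).2 (hgval_ne_b x hxv hxa), heta, Equiv.Perm.inv_apply_self]
      · -- right inverse
        intro x
        by_cases hxv : x = v
        · subst hxv
          rw [hFinvv, hFa]
        · by_cases hxb : x = b
          · subst hxb
            rw [hFinvb, hFv]
          · rw [hFinvo x hxv hxb,
              hFo _ (g⁻¹ ⟨x, hxv⟩).2 (hginvval_ne_a x hxv hxb), heta, Equiv.Perm.apply_inv_self]
      · -- adjacency
        intro x
        show H.Adj x (F x)
        by_cases hxv : x = v
        · subst hxv
          rw [hFv]
          exact hvb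
        · by_cases hxa : x = a
          · subst hxa
            rw [hFa]
            exact hva.symm
          · rw [hFo x hxv hxa]
            rcases (hH'adj ⟨x, hxv⟩ (g ⟨x, hxv⟩)).1 (hgadj ⟨x, hxv⟩) with h | ⟨h1, h2⟩ | ⟨h1, h2⟩
            · exact h
            · exact absurd h1 hxa
            · exfalso
              apply hg2 ⟨a, hav⟩
              rw [hgA]
              have hxB : (⟨x, hxv⟩ : {x : W // x ≠ v}) = ⟨b, hbv⟩ := Subtype.ext h1
              rw [← hxB]
              exact Subtype.ext h2
      · -- no 2-cycles
        intro x
        show F (F x) ≠ x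
        by_cases hxv : x = v
        · subst hxv
          rw [hFv, hFo b hbv (fun hc => hab hc.symm)]
          exact (g ⟨b, hbv⟩).2
        · by_cases hxa : x = a
          · subst hxa
            rw [hFa, hFv]
            exact fun hc => hab hc.symm
          · rw [hFo x hxv hxa]
            by_cases hya : (g ⟨x, hxv⟩).1 = a
            · rw [hya, hFa]
              exact fun hc => hxv hc.symm
            · rw [hFo _ (g ⟨x, hxv⟩).2 hya, heta]
              intro hc
              exact hg2 ⟨x, hxv⟩ (Subtype.ext hc)

end Rotation

section PartC
open Finset SimpleGraph Equiv

variable {V : Type*} [Fintype V] [DecidableEq V]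

lemma spanGraph_adj_of_mem {E' : Finset (Sym2 V)} (hloop : ∀ e ∈ E', ¬ e.IsDiag)
    {x y : V} (h : s(x, y) ∈ E') : (spanGraph E').Adj x y := by
  rw [spanGraph_adj]
  refine ⟨h, fun hc => ?_⟩
  exact hloop _ h (by simp [hc])

lemma mem_supp_of_comp {H : SimpleGraph V} {C : H.ConnectedComponent}
    (hC : ∃ a b, H.Adj a b ∧ H.connectedComponentMk a = C) {u : V}
    (hu : H.connectedComponentMk u = C) : u ∈ H.support := by
  obtain ⟨a, b, hadj, ha⟩ := hC
  have hr : H.Reachable u a := (SimpleGraph.ConnectedComponent.eq).1 (hu.trans ha.symm)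
  obtain ⟨p⟩ := hr
  cases p with
  | nil => exact ⟨b, hadj⟩
  | cons h q => exact ⟨_, h⟩

lemma adj_comp_eq {H : SimpleGraph V} {x y : V} (h : H.Adj x y) :
    H.connectedComponentMk y = H.connectedComponentMk x :=
  SimpleGraph.ConnectedComponent.sound h.symm.reachable

lemma comp_structure {E' : Finset (Sym2 V)} (hel : IsElementary E')
    {C : (spanGraph E').ConnectedComponent}
    (hC : ∃ a b, (spanGraph E').Adj a b ∧ (spanGraph E').connectedComponentMk a = C) :
    (∀ v, (spanGraph E').connectedComponentMk v = C → (spanGraph E').degree v = 2) ∨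
    (∃ a b, (spanGraph E').Adj a b ∧ (spanGraph E').connectedComponentMk a = C ∧
      (spanGraph E').degree a = 1 ∧ (spanGraph E').degree b = 1 ∧
      ∀ u, (spanGraph E').connectedComponentMk u = C → (u = a ∨ u = b)) := by
  by_cases hall : ∀ v, (spanGraph E').connectedComponentMk v = C → (spanGraph E').degree v = 2
  · exact Or.inl hall
  · push_neg at hall
    obtain ⟨v, hvC, hvdeg⟩ := hall
    have hvsupp : v ∈ (spanGraph E').support := mem_supp_of_comp hC hvC
    have hdeg1 : (spanGraph E').degree v = 1 := by
      rcases hel.1 v hvsupp with h | h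
      · exact h
      · exact absurd h hvdeg
    obtain ⟨w, hw⟩ := Finset.card_eq_one.1 hdeg1
    have hadjvw : (spanGraph E').Adj v w := by
      rw [← SimpleGraph.mem_neighborFinset, hw]
      exact Finset.mem_singleton_self w
    have hdegw : (spanGraph E').degree w = 1 := hel.2 v w hdeg1 hadjvw
    obtain ⟨u, hu⟩ := Finset.card_eq_one.1 hdegw
    have huv : u = v := by
      have : v ∈ (spanGraph E').neighborFinset w := (SimpleGraph.mem_neighborFinset _ _ _).2 hadjvw.symm
      rw [hu, Finset.mem_singleton] at this
      exact this.symm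
    refine Or.inr ⟨v, w, hadjvw, hvC, hdeg1, hdegw, fun z hz => ?_⟩
    have hclosed : ∀ ⦃x y : V⦄, x ∈ ({v, w} : Set V) → (spanGraph E').Adj x y → y ∈ ({v, w} : Set V) := by
      rintro x y (rfl | rfl) hxy
      · have : y ∈ (spanGraph E').neighborFinset x := (SimpleGraph.mem_neighborFinset _ _ _).2 hxy
        rw [hw, Finset.mem_singleton] at this
        exact Or.inr this
      · have : y ∈ (spanGraph E').neighborFinset x := (SimpleGraph.mem_neighborFinset _ _ _).2 hxy
        rw [hu, Finset.mem_singleton, huv] at this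
        exact Or.inl this
    have hr : (spanGraph E').Reachable v z := (SimpleGraph.ConnectedComponent.eq).1 (hvC.trans hz.symm)
    exact reachable_closed hclosed hr (Or.inl rfl)

lemma comp_walk_transfer {H : SimpleGraph V} {C : H.ConnectedComponent} :
    ∀ {x y : V} (_ : H.Walk x y) (hx : H.connectedComponentMk x = C)
      (hy : H.connectedComponentMk y = C),
      (H.comap (Subtype.val : {z : V // H.connectedComponentMk z = C} → V)).Reachable
        ⟨x, hx⟩ ⟨y, hy⟩ := by
  intro x y p
  induction p with
  | nil => intro hx hy; exact SimpleGraph.Reachable.refl _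
  | @cons s t _ h q ih =>
    intro hx hy
    have ht : H.connectedComponentMk t = C := (adj_comp_eq h).trans hx
    exact ((SimpleGraph.comap_adj.2 h : _)).reachable.trans (ih ht hy)

lemma cycle_comp_rotation {E' : Finset (Sym2 V)}
    {C : (spanGraph E').ConnectedComponent}
    (hC : ∃ a b, (spanGraph E').Adj a b ∧ (spanGraph E').connectedComponentMk a = C)
    (hdeg : ∀ v, (spanGraph E').connectedComponentMk v = C → (spanGraph E').degree v = 2) :
    ∃ p : Equiv.Perm V,
      (∀ x, (spanGraph E').connectedComponentMk x ≠ C → p x = x) ∧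
      (∀ x, (spanGraph E').connectedComponentMk x = C → (spanGraph E').Adj x (p x)) ∧
      (∀ x, (spanGraph E').connectedComponentMk x = C → p (p x) ≠ x) := by
  classical
  obtain ⟨a, b, hadj, haC⟩ := hC
  have hconn : (((spanGraph E').comap (Subtype.val : {z : V // (spanGraph E').connectedComponentMk z = C} → V))).Connected := by
    have hne : Nonempty {z : V // (spanGraph E').connectedComponentMk z = C} := ⟨⟨a, haC⟩⟩
    refine ⟨fun x y => ?_⟩
    obtain ⟨p⟩ := (SimpleGraph.ConnectedComponent.eq).1 (x.2.trans y.2.symm)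
    have := comp_walk_transfer p x.2 y.2
    simpa using this
  have htwo : ∀ x : {z : V // (spanGraph E').connectedComponentMk z = C}, ∃ p q : {z : V // (spanGraph E').connectedComponentMk z = C}, p ≠ q ∧ ∀ y, (((spanGraph E').comap (Subtype.val : {z : V // (spanGraph E').connectedComponentMk z = C} → V))).Adj x y ↔ y = p ∨ y = q := by
    rintro ⟨x, hx⟩
    obtain ⟨p, q, hpq, hN⟩ := Finset.card_eq_two.1 (hdeg x hx)
    have hadjp : (spanGraph E').Adj x p := by
      rw [← SimpleGraph.mem_neighborFinset, hN]; simp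
    have hadjq : (spanGraph E').Adj x q := by
      rw [← SimpleGraph.mem_neighborFinset, hN]; simp
    refine ⟨⟨p, (adj_comp_eq hadjp).trans hx⟩, ⟨q, (adj_comp_eq hadjq).trans hx⟩,
      fun hc => hpq (congrArg Subtype.val hc), ?_⟩
    rintro ⟨y, hy⟩
    rw [SimpleGraph.comap_adj]
    constructor
    · intro h
      have : y ∈ (spanGraph E').neighborFinset x := (SimpleGraph.mem_neighborFinset _ _ _).2 h
      rw [hN] at this
      rcases Finset.mem_insert.1 this with h1 | h1
      · exact Or.inl (Subtype.ext h1)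
      · exact Or.inr (Subtype.ext (Finset.mem_singleton.1 h1))
    · rintro (h | h) <;> rw [Subtype.mk.injEq] at h <;> subst h
      · exact hadjp
      · exact hadjq
  obtain ⟨g, hgadj, hg2⟩ := rotation_exists (Fintype.card {z : V // (spanGraph E').connectedComponentMk z = C}) _ inferInstance ((spanGraph E').comap Subtype.val) le_rfl hconn htwo
  set F : V → V :=
    fun x => if h : (spanGraph E').connectedComponentMk x = C then (g ⟨x, h⟩).1 else x with hF
  set Finv : V → V :=
    fun x => if h : (spanGraph E').connectedComponentMk x = C then (g⁻¹ ⟨x, h⟩).1 else x with hFinv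
  have hFin : ∀ (x : V) (h : (spanGraph E').connectedComponentMk x = C), F x = (g ⟨x, h⟩).1 :=
    fun x h => dif_pos h
  have hFout : ∀ (x : V), (spanGraph E').connectedComponentMk x ≠ C → F x = x :=
    fun x h => dif_neg h
  have hFinvin : ∀ (x : V) (h : (spanGraph E').connectedComponentMk x = C),
      Finv x = (g⁻¹ ⟨x, h⟩).1 := fun x h => dif_pos h
  have hFinvout : ∀ (x : V), (spanGraph E').connectedComponentMk x ≠ C → Finv x = x :=
    fun x h => dif_neg h
  have heta : ∀ (x : {z : V // (spanGraph E').connectedComponentMk z = C})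
      (h : (spanGraph E').connectedComponentMk x.1 = C),
      (⟨x.1, h⟩ : {z : V // (spanGraph E').connectedComponentMk z = C}) = x :=
    fun x h => Subtype.ext rfl
  refine ⟨⟨F, Finv, ?_, ?_⟩, ?_, ?_, ?_⟩
  · intro x
    by_cases h : (spanGraph E').connectedComponentMk x = C
    · rw [hFin x h, hFinvin _ (g ⟨x, h⟩).2, heta (g ⟨x, h⟩) (g ⟨x, h⟩).2,
        Equiv.Perm.inv_apply_self]
    · rw [hFout x h, hFinvout x h]
  · intro x
    by_cases h : (spanGraph E').connectedComponentMk x = C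
    · rw [hFinvin x h, hFin _ (g⁻¹ ⟨x, h⟩).2, heta (g⁻¹ ⟨x, h⟩) (g⁻¹ ⟨x, h⟩).2,
        Equiv.Perm.apply_inv_self]
    · rw [hFinvout x h, hFout x h]
  · intro x hx
    exact hFout x hx
  · intro x hx
    show (spanGraph E').Adj x (F x)
    rw [hFin x hx]
    exact hgadj ⟨x, hx⟩
  · intro x hx
    show F (F x) ≠ x
    rw [hFin x hx, hFin _ (g ⟨x, hx⟩).2, heta (g ⟨x, hx⟩) (g ⟨x, hx⟩).2]
    intro hc
    exact hg2 ⟨x, hx⟩ (Subtype.ext hc)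

lemma master_sel {E' : Finset (Sym2 V)} (hel : IsElementary E') :
    ∀ C : (spanGraph E').ConnectedComponent, ∃ p : Equiv.Perm V,
      (∀ x, (spanGraph E').connectedComponentMk x ≠ C → p x = x) ∧
      (∀ x, (spanGraph E').connectedComponentMk x = C → x ∈ (spanGraph E').support →
        (spanGraph E').Adj x (p x)) ∧
      (∀ x, (spanGraph E').connectedComponentMk x = C → x ∉ (spanGraph E').support → p x = x) ∧
      (∀ x y, (spanGraph E').connectedComponentMk x = C → (spanGraph E').Adj x y →
        (y = p x ∨ x = p y)) := by
  intro C
  by_cases hC : ∃ a b, (spanGraph E').Adj a b ∧ (spanGraph E').connectedComponentMk a = C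
  · rcases comp_structure hel hC with hcyc | hedge
    · obtain ⟨p, hp1, hp2, hp3⟩ := cycle_comp_rotation hC hcyc
      have hmkpinv : ∀ x, (spanGraph E').connectedComponentMk x = C →
          (spanGraph E').connectedComponentMk (p⁻¹ x) = C := by
        intro x hx
        by_contra hne
        have h1 : p (p⁻¹ x) = p⁻¹ x := hp1 _ hne
        rw [Equiv.Perm.apply_inv_self] at h1
        have h2 : p x = x := by
          nth_rewrite 1 [h1]
          rw [Equiv.Perm.apply_inv_self]
        exact (spanGraph E').irrefl (h2 ▸ hp2 x hx)
      refine ⟨p, hp1, fun x hx _ => hp2 x hx,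
        fun x hx hxs => absurd ⟨p x, hp2 x hx⟩ hxs, ?_⟩
      intro x y hx hxy
      have hpadj : (spanGraph E').Adj x (p x) := hp2 x hx
      have hpinvadj : (spanGraph E').Adj x (p⁻¹ x) := by
        have h3 := hp2 (p⁻¹ x) (hmkpinv x hx)
        rw [Equiv.Perm.apply_inv_self] at h3
        exact h3.symm
      have hne : p x ≠ p⁻¹ x := by
        intro hc
        apply hp3 x hx
        rw [hc, Equiv.Perm.apply_inv_self]
      have hsub : ({p x, p⁻¹ x} : Finset V) ⊆ (spanGraph E').neighborFinset x := by
        intro z hz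
        rcases Finset.mem_insert.1 hz with rfl | hz1
        · rw [SimpleGraph.mem_neighborFinset]; exact hpadj
        · rw [Finset.mem_singleton] at hz1; subst hz1
          rw [SimpleGraph.mem_neighborFinset]; exact hpinvadj
      have hcard : ((spanGraph E').neighborFinset x).card = 2 := hcyc x hx
      have hNeq : (spanGraph E').neighborFinset x = {p x, p⁻¹ x} := by
        refine (Finset.eq_of_subset_of_card_le hsub ?_).symm
        rw [hcard, Finset.card_pair hne]
      have hyN : y ∈ (spanGraph E').neighborFinset x := by
        rw [SimpleGraph.mem_neighborFinset]; exact hxy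
      rw [hNeq] at hyN
      rcases Finset.mem_insert.1 hyN with rfl | h1
      · exact Or.inl rfl
      · rw [Finset.mem_singleton] at h1; subst h1
        exact Or.inr (by rw [Equiv.Perm.apply_inv_self])
    · obtain ⟨a, b, hab, haC, hdega, hdegb, hmem⟩ := hedge
      have hbC : (spanGraph E').connectedComponentMk b = C := (adj_comp_eq hab).trans haC
      have hNa : (spanGraph E').neighborFinset a = {b} := by
        obtain ⟨u, hu⟩ := Finset.card_eq_one.1 hdega
        have hbu : b ∈ (spanGraph E').neighborFinset a := by
          rw [SimpleGraph.mem_neighborFinset]; exact hab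
        rw [hu, Finset.mem_singleton] at hbu
        rw [hu, ← hbu]
      have hNb : (spanGraph E').neighborFinset b = {a} := by
        obtain ⟨u, hu⟩ := Finset.card_eq_one.1 hdegb
        have hau : a ∈ (spanGraph E').neighborFinset b := by
          rw [SimpleGraph.mem_neighborFinset]; exact hab.symm
        rw [hu, Finset.mem_singleton] at hau
        rw [hu, ← hau]
      refine ⟨Equiv.swap a b, ?_, ?_, ?_, ?_⟩
      · intro x hx
        exact Equiv.swap_apply_of_ne_of_ne (fun hc => hx (hc ▸ haC)) (fun hc => hx (hc ▸ hbC))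
      · intro x hx _
        rcases hmem x hx with rfl | rfl
        · rw [Equiv.swap_apply_left]; exact hab
        · rw [Equiv.swap_apply_right]; exact hab.symm
      · intro x hx hxs
        exfalso
        apply hxs
        rcases hmem x hx with rfl | rfl
        · exact ⟨b, hab⟩
        · exact ⟨a, hab.symm⟩
      · intro x y hx hxy
        left
        have hyN : y ∈ (spanGraph E').neighborFinset x := by
          rw [SimpleGraph.mem_neighborFinset]; exact hxy
        rcases hmem x hx with rfl | rfl
        · rw [hNa, Finset.mem_singleton] at hyN
          rw [hyN, Equiv.swap_apply_left]
        · rw [hNb, Finset.mem_singleton] at hyN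
          rw [hyN, Equiv.swap_apply_right]
  · refine ⟨1, fun x _ => rfl, ?_, fun x _ _ => rfl, ?_⟩
    · intro x hx hxs
      exfalso
      obtain ⟨y, hy⟩ := hxs
      exact hC ⟨x, y, hy, hx⟩
    · intro x y hx hxy
      exact absurd ⟨x, y, hxy, hx⟩ hC

lemma fiber_nonempty {E' : Finset (Sym2 V)} (hloop : ∀ e ∈ E', ¬ e.IsDiag)
    (hel : IsElementary E') : ∃ σ : Equiv.Perm V, es σ = E' := by
  classical
  choose sel h1 h2 h3 h4 using master_sel hel
  have hmkfix : ∀ x : V, (spanGraph E').connectedComponentMk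
      (sel ((spanGraph E').connectedComponentMk x) x) = (spanGraph E').connectedComponentMk x := by
    intro x
    by_cases hx : x ∈ (spanGraph E').support
    · exact adj_comp_eq (h2 _ x rfl hx)
    · rw [h3 _ x rfl hx]
  have hmkfixinv : ∀ x : V, (spanGraph E').connectedComponentMk
      ((sel ((spanGraph E').connectedComponentMk x))⁻¹ x) =
        (spanGraph E').connectedComponentMk x := by
    intro x
    by_contra hne
    have h5 := h1 _ _ hne
    rw [Equiv.Perm.apply_inv_self] at h5
    apply hne
    rw [← h5]
  have hli : Function.LeftInverse
      (fun x => (sel ((spanGraph E').connectedComponentMk x))⁻¹ x)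
      (fun x => sel ((spanGraph E').connectedComponentMk x) x) := by
    intro x
    simp only []
    rw [hmkfix x, Equiv.Perm.inv_apply_self]
  have hri : Function.RightInverse
      (fun x => (sel ((spanGraph E').connectedComponentMk x))⁻¹ x)
      (fun x => sel ((spanGraph E').connectedComponentMk x) x) := by
    intro x
    simp only []
    rw [hmkfixinv x, Equiv.Perm.apply_inv_self]
  refine ⟨⟨fun x => sel ((spanGraph E').connectedComponentMk x) x,
     fun x => (sel ((spanGraph E').connectedComponentMk x))⁻¹ x, hli, hri⟩, ?_⟩
  set σ : Equiv.Perm V :=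
    (⟨fun x => sel ((spanGraph E').connectedComponentMk x) x,
     fun x => (sel ((spanGraph E').connectedComponentMk x))⁻¹ x, hli, hri⟩ : Equiv.Perm V) with hσ
  show es σ = E'
  have happly : ∀ x : V, σ x = sel ((spanGraph E').connectedComponentMk x) x := fun x => rfl
  have hfix : ∀ x : V, x ∉ (spanGraph E').support → σ x = x := by
    intro x hx
    rw [happly, h3 _ x rfl hx]
  have hadjσ : ∀ x : V, x ∈ (spanGraph E').support → (spanGraph E').Adj x (σ x) := by
    intro x hx
    rw [happly]
    exact h2 _ x rfl hx
  apply Finset.Subset.antisymm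
  · intro e he
    rw [es, Finset.mem_image] at he
    obtain ⟨i, hi, rfl⟩ := he
    have hisupp : i ∈ (spanGraph E').support := by
      by_contra hns
      exact Equiv.Perm.mem_support.1 hi (hfix i hns)
    exact ((spanGraph_adj E').1 (hadjσ i hisupp)).1
  · intro e he
    induction e with
    | _ x y =>
      have hadj : (spanGraph E').Adj x y := spanGraph_adj_of_mem hloop he
      rcases h4 _ x y rfl hadj with h5 | h5
      · rw [es, Finset.mem_image]
        refine ⟨x, ?_, by rw [happly, ← h5]⟩
        rw [Equiv.Perm.mem_support, happly, ← h5]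
        exact hadj.ne'
      · have hmkxy := adj_comp_eq hadj
        rw [es, Finset.mem_image]
        refine ⟨y, ?_, ?_⟩
        · rw [Equiv.Perm.mem_support, happly, hmkxy, ← h5]
          exact hadj.ne
        · rw [happly, hmkxy, ← h5, Sym2.eq_swap]

end PartC

section Fib
open Finset SimpleGraph Equiv

variable {V : Type*} [Fintype V] [DecidableEq V] {E' : Finset (Sym2 V)} {σ τ : Equiv.Perm V}

lemma fib_mem_support (hσ : es σ = E') {x : V} :
    x ∈ σ.support ↔ x ∈ (spanGraph E').support := by
  have h := es_support σ
  rw [hσ] at h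
  rw [h, Finset.mem_coe]

lemma fib_adj (hσ : es σ = E') {x : V} (hx : x ∈ σ.support) :
    (spanGraph E').Adj x (σ x) := by
  rw [← hσ]
  exact (es_adj σ).2 (Or.inl ⟨hx, rfl⟩)

lemma fib_adj_inv (hσ : es σ = E') {x : V} (hx : x ∈ σ.support) :
    (spanGraph E').Adj x (σ⁻¹ x) := by
  have hx' : σ⁻¹ x ∈ σ.support := by
    rw [← Equiv.Perm.support_inv]
    exact Equiv.Perm.apply_mem_support.2 (by rwa [Equiv.Perm.support_inv])
  have h := fib_adj hσ hx'
  rw [Equiv.Perm.apply_inv_self] at h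
  exact h.symm

lemma fib_nbr (hσ : es σ = E') {x : V} (hx : x ∈ σ.support) :
    (spanGraph E').neighborFinset x = {σ x, σ⁻¹ x} := by
  rw [← hσ]
  exact es_neighborFinset σ hx

lemma fib_degree (hσ : es σ = E') {x : V} (hx : x ∈ σ.support) :
    (spanGraph E').degree x = if σ x = σ⁻¹ x then 1 else 2 := by
  rw [← hσ]
  exact es_degree σ hx

lemma fib_mk (hσ : es σ = E') (x : V) :
    (spanGraph E').connectedComponentMk (σ x) = (spanGraph E').connectedComponentMk x := by
  by_cases hx : x ∈ σ.support
  · exact adj_comp_eq (fib_adj hσ hx)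
  · rw [Equiv.Perm.not_mem_support.1 hx]

lemma fib_mk_inv (hσ : es σ = E') (x : V) :
    (spanGraph E').connectedComponentMk (σ⁻¹ x) = (spanGraph E').connectedComponentMk x := by
  have h := fib_mk hσ (σ⁻¹ x)
  rw [Equiv.Perm.apply_inv_self] at h
  exact h.symm

lemma flip_works (hσ : es σ = E') (Pr : (spanGraph E').ConnectedComponent → Prop) :
    ∃ τ : Equiv.Perm V, es τ = E' ∧
      ∀ x, τ x = if Pr ((spanGraph E').connectedComponentMk x) then σ⁻¹ x else σ x := by
  classical
  have hli : Function.LeftInverse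
      (fun x => if Pr ((spanGraph E').connectedComponentMk x) then σ x else σ⁻¹ x)
      (fun x => if Pr ((spanGraph E').connectedComponentMk x) then σ⁻¹ x else σ x) := by
    intro x
    simp only []
    by_cases h : Pr ((spanGraph E').connectedComponentMk x)
    · rw [if_pos h, if_pos (by rwa [fib_mk_inv hσ]), Equiv.Perm.apply_inv_self]
    · rw [if_neg h, if_neg (by rwa [fib_mk hσ]), Equiv.Perm.inv_apply_self]
  have hri : Function.RightInverse
      (fun x => if Pr ((spanGraph E').connectedComponentMk x) then σ x else σ⁻¹ x)
      (fun x => if Pr ((spanGraph E').connectedComponentMk x) then σ⁻¹ x else σ x) := by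
    intro x
    simp only []
    by_cases h : Pr ((spanGraph E').connectedComponentMk x)
    · rw [if_pos h, if_pos (by rwa [fib_mk hσ]), Equiv.Perm.inv_apply_self]
    · rw [if_neg h, if_neg (by rwa [fib_mk_inv hσ]), Equiv.Perm.apply_inv_self]
  refine ⟨⟨fun x => if Pr ((spanGraph E').connectedComponentMk x) then σ⁻¹ x else σ x,
    fun x => if Pr ((spanGraph E').connectedComponentMk x) then σ x else σ⁻¹ x, hli, hri⟩,
    ?_, fun x => rfl⟩
  set τ : Equiv.Perm V :=
    (⟨fun x => if Pr ((spanGraph E').connectedComponentMk x) then σ⁻¹ x else σ x,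
    fun x => if Pr ((spanGraph E').connectedComponentMk x) then σ x else σ⁻¹ x, hli, hri⟩ :
      Equiv.Perm V) with hτdef
  have happ : ∀ x, τ x = if Pr ((spanGraph E').connectedComponentMk x) then σ⁻¹ x else σ x :=
    fun x => rfl
  have hsupp : ∀ x, x ∈ τ.support ↔ x ∈ σ.support := by
    intro x
    rw [Equiv.Perm.mem_support, Equiv.Perm.mem_support, happ]
    by_cases h : Pr ((spanGraph E').connectedComponentMk x)
    · rw [if_pos h]
      rw [← Equiv.Perm.mem_support, ← Equiv.Perm.mem_support, ← Equiv.Perm.support_inv σ]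
    · rw [if_neg h]
  apply Finset.Subset.antisymm
  · intro e he
    rw [es, Finset.mem_image] at he
    obtain ⟨i, hi, rfl⟩ := he
    have hiσ : i ∈ σ.support := (hsupp i).1 hi
    rw [happ]
    by_cases h : Pr ((spanGraph E').connectedComponentMk i)
    · rw [if_pos h]
      exact ((spanGraph_adj E').1 (fib_adj_inv hσ hiσ)).1
    · rw [if_neg h]
      exact ((spanGraph_adj E').1 (fib_adj hσ hiσ)).1
  · intro e he
    rw [← hσ] at he
    rw [es, Finset.mem_image] at he
    obtain ⟨i, hi, rfl⟩ := he
    rw [es, Finset.mem_image]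
    by_cases h : Pr ((spanGraph E').connectedComponentMk i)
    · refine ⟨σ i, ?_, ?_⟩
      · rw [hsupp]
        exact Equiv.Perm.apply_mem_support.2 hi
      · rw [happ, fib_mk hσ, if_pos h, Equiv.Perm.inv_apply_self, Sym2.eq_swap]
    · refine ⟨i, (hsupp i).2 hi, ?_⟩
      rw [happ, if_neg h]

lemma agree_propagate (hσ : es σ = E') (hτ : es τ = E') :
    ∀ x y, σ x = τ x → (spanGraph E').Adj x y → σ y = τ y := by
  intro x y hagree hxy
  have hxS : x ∈ (spanGraph E').support := ⟨y, hxy⟩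
  have hyS : y ∈ (spanGraph E').support := ⟨x, hxy.symm⟩
  have hxσ : x ∈ σ.support := (fib_mem_support hσ).2 hxS
  have hyσ : y ∈ σ.support := (fib_mem_support hσ).2 hyS
  have hxτ : x ∈ τ.support := (fib_mem_support hτ).2 hxS
  have hyτ : y ∈ τ.support := (fib_mem_support hτ).2 hyS
  by_cases hyx : y = σ x
  · have hyx' : y = τ x := by rw [← hagree]; exact hyx
    have hinvσ : σ⁻¹ y = x := by rw [hyx]; simp
    have hinvτ : τ⁻¹ y = x := by rw [hyx']; simp
    by_cases h2 : σ y = σ⁻¹ y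
    · have hd1 := fib_degree hσ hyσ
      rw [if_pos h2] at hd1
      have hd2 := fib_degree hτ hyτ
      rw [hd1] at hd2
      have h3 : τ y = τ⁻¹ y := by
        by_contra h4
        rw [if_neg h4] at hd2
        omega
      rw [h2, hinvσ, h3, hinvτ]
    · have hd1 := fib_degree hσ hyσ
      rw [if_neg h2] at hd1
      have hτyN : τ y ∈ (spanGraph E').neighborFinset y := by
        rw [SimpleGraph.mem_neighborFinset]
        exact fib_adj hτ hyτ
      rw [fib_nbr hσ hyσ] at hτyN
      rcases Finset.mem_insert.1 hτyN with h3 | h3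
      · exact h3.symm
      · rw [Finset.mem_singleton] at h3
        exfalso
        have hd2 := fib_degree hτ hyτ
        rw [hd1] at hd2
        rw [if_pos (by rw [h3, hinvσ, ← hinvτ]) ] at hd2
        omega
  · have hyN : y ∈ (spanGraph E').neighborFinset x := by
      rw [SimpleGraph.mem_neighborFinset]
      exact hxy
    have hyNσ := hyN
    rw [fib_nbr hσ hxσ] at hyNσ
    have hy1 : y = σ⁻¹ x := by
      rcases Finset.mem_insert.1 hyNσ with h3 | h3
      · exact absurd h3 hyx
      · exact Finset.mem_singleton.1 h3
    rw [fib_nbr hτ hxτ] at hyN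
    have hy2 : y = τ⁻¹ x := by
      rcases Finset.mem_insert.1 hyN with h3 | h3
      · rw [← hagree] at h3
        exact absurd h3 hyx
      · exact Finset.mem_singleton.1 h3
    have h5 : σ y = x := by rw [hy1]; simp
    have h6 : τ y = x := by rw [hy2]; simp
    rw [h5, h6]

end Fib

section FibCard
open Finset SimpleGraph Equiv

variable {V : Type*} [Fintype V] [DecidableEq V] {E' : Finset (Sym2 V)} {σ : Equiv.Perm V}

lemma orient_dichotomy (hσ : es σ = E') {v n : V} (hadj : (spanGraph E').Adj v n)
    (hdeg : (spanGraph E').degree v = 2) :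
    (σ v = n ∧ σ⁻¹ v ≠ n) ∨ (σ v ≠ n ∧ σ⁻¹ v = n) := by
  have hvS : v ∈ σ.support := (fib_mem_support hσ).2 ⟨n, hadj⟩
  have hne : σ v ≠ σ⁻¹ v := by
    intro hc
    have hd := fib_degree hσ hvS
    rw [if_pos hc, hdeg] at hd
    omega
  have hmem : n ∈ ({σ v, σ⁻¹ v} : Finset V) := by
    rw [← fib_nbr hσ hvS, SimpleGraph.mem_neighborFinset]
    exact hadj
  rcases Finset.mem_insert.1 hmem with h | h
  · exact Or.inl ⟨h.symm, fun hc => hne (h.symm.trans hc.symm)⟩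
  · rw [Finset.mem_singleton] at h
    exact Or.inr ⟨fun hc => hne (hc.trans h), h.symm⟩

lemma fib_card {E' : Finset (Sym2 V)} (hloop : ∀ e ∈ E', ¬ e.IsDiag)
    (hel : IsElementary E') :
    (Finset.univ.filter fun σ : Equiv.Perm V => es σ = E').card =
      2 ^ numCycleComponents E' := by
  classical
  have hvn : ∀ C : {C : (spanGraph E').ConnectedComponent //
      (∃ v w, (spanGraph E').Adj v w ∧ (spanGraph E').connectedComponentMk v = C) ∧
      ∀ v, (spanGraph E').connectedComponentMk v = C → (spanGraph E').degree v = 2},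
      ∃ v, (∃ w, (spanGraph E').Adj v w) ∧ (spanGraph E').connectedComponentMk v = C.1 := by
    rintro ⟨C, ⟨v, w, hadj, hv⟩, _⟩
    exact ⟨v, ⟨w, hadj⟩, hv⟩
  set Cyc := {C : (spanGraph E').ConnectedComponent //
      (∃ v w, (spanGraph E').Adj v w ∧ (spanGraph E').connectedComponentMk v = C) ∧
      ∀ v, (spanGraph E').connectedComponentMk v = C → (spanGraph E').degree v = 2} with hCycdef
  set vC : Cyc → V := fun C => (hvn C).choose with hvCdef
  have hvCmk : ∀ C : Cyc, (spanGraph E').connectedComponentMk (vC C) = C.1 :=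
    fun C => (hvn C).choose_spec.2
  have hvCadj : ∀ C : Cyc, ∃ w, (spanGraph E').Adj (vC C) w :=
    fun C => (hvn C).choose_spec.1
  set nC : Cyc → V := fun C => (hvCadj C).choose with hnCdef
  have hnCadj : ∀ C : Cyc, (spanGraph E').Adj (vC C) (nC C) := fun C => (hvCadj C).choose_spec
  have hinj : ∀ σ τ : Equiv.Perm V, es σ = E' → es τ = E' →
      (∀ C : Cyc, (if σ (vC C) = nC C then true else false) =
        (if τ (vC C) = nC C then true else false)) → σ = τ := by
    intro σ τ hσ hτ hFeq
    ext x
    by_cases hxS : x ∈ (spanGraph E').support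
    · have hxσ := (fib_mem_support hσ).2 hxS
      have hxτ := (fib_mem_support hτ).2 hxS
      rcases hel.1 x hxS with hdeg | hdeg
      · have h1 : σ x = σ⁻¹ x := by
          by_contra h
          have hd := fib_degree hσ hxσ
          rw [if_neg h, hdeg] at hd
          omega
        have h2 : τ x ∈ ({σ x, σ⁻¹ x} : Finset V) := by
          rw [← fib_nbr hσ hxσ, SimpleGraph.mem_neighborFinset]
          exact fib_adj hτ hxτ
        rcases Finset.mem_insert.1 h2 with h3 | h3
        · exact h3.symm
        · rw [Finset.mem_singleton] at h3
          rw [h3, ← h1]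
      · have hCx : ∃ a b, (spanGraph E').Adj a b ∧
            (spanGraph E').connectedComponentMk a = (spanGraph E').connectedComponentMk x :=
          ⟨x, σ x, fib_adj hσ hxσ, rfl⟩
        rcases comp_structure hel hCx with hcyc | hedge
        · have hC : ((spanGraph E').connectedComponentMk x) ∈
              {C : (spanGraph E').ConnectedComponent | True} := trivial
          set C : Cyc := ⟨(spanGraph E').connectedComponentMk x, hCx, hcyc⟩ with hCdef
          have hvmk : (spanGraph E').connectedComponentMk (vC C) =
              (spanGraph E').connectedComponentMk x := hvCmk C
          have hdegv : (spanGraph E').degree (vC C) = 2 := hcyc _ hvmk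
          have hadjv := hnCadj C
          have hvσ : vC C ∈ σ.support := (fib_mem_support hσ).2 ⟨nC C, hadjv⟩
          have hseed : σ (vC C) = τ (vC C) := by
            have hb := hFeq C
            rcases orient_dichotomy hσ hadjv hdegv with ⟨h1, h2⟩ | ⟨h1, h2⟩ <;>
              rcases orient_dichotomy hτ hadjv hdegv with ⟨h3, h4⟩ | ⟨h3, h4⟩
            · rw [h1, h3]
            · rw [if_pos h1, if_neg h3] at hb
              cases hb
            · rw [if_neg h1, if_pos h3] at hb
              cases hb
            · have hτN : τ (vC C) ∈ ({σ (vC C), σ⁻¹ (vC C)} : Finset V) := by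
                rw [← fib_nbr hσ hvσ, SimpleGraph.mem_neighborFinset]
                exact fib_adj hτ ((fib_mem_support hτ).2 ⟨nC C, hadjv⟩)
              rcases Finset.mem_insert.1 hτN with h5 | h5
              · exact h5.symm
              · rw [Finset.mem_singleton] at h5
                exact absurd (h5.trans h2) h3
          have hreach : (spanGraph E').Reachable (vC C) x :=
            (SimpleGraph.ConnectedComponent.eq).1 hvmk
          exact reachable_closed (A := {z | σ z = τ z})
            (fun a b ha hab => agree_propagate hσ hτ a b ha hab) hreach hseed
        · obtain ⟨a, b, hab, haC, hda, hdb, hmem⟩ := hedge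
          exfalso
          rcases hmem x rfl with rfl | rfl
          · rw [hda] at hdeg
            omega
          · rw [hdb] at hdeg
            omega
    · have h1 : σ x = x :=
        Equiv.Perm.not_mem_support.1 (fun hc => hxS ((fib_mem_support hσ).1 hc))
      have h2 : τ x = x :=
        Equiv.Perm.not_mem_support.1 (fun hc => hxS ((fib_mem_support hτ).1 hc))
      rw [h1, h2]
  have hsurj : ∀ ε : Cyc → Bool, ∃ σ : Equiv.Perm V, es σ = E' ∧
      ∀ C : Cyc, (if σ (vC C) = nC C then true else false) = ε C := by
    intro ε
    obtain ⟨σ0, hσ0⟩ := fiber_nonempty hloop hel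
    set Pr : (spanGraph E').ConnectedComponent → Prop := fun D =>
      ∃ h : (∃ v w, (spanGraph E').Adj v w ∧ (spanGraph E').connectedComponentMk v = D) ∧
          (∀ v, (spanGraph E').connectedComponentMk v = D → (spanGraph E').degree v = 2),
        (if σ0 (vC ⟨D, h⟩) = nC ⟨D, h⟩ then true else false) ≠ ε ⟨D, h⟩ with hPrdef
    obtain ⟨τ, hτ, hτval⟩ := flip_works hσ0 Pr
    refine ⟨τ, hτ, ?_⟩
    rintro ⟨D, hD⟩
    have hvmk : (spanGraph E').connectedComponentMk (vC ⟨D, hD⟩) = D := hvCmk ⟨D, hD⟩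
    have hdegv : (spanGraph E').degree (vC ⟨D, hD⟩) = 2 := hD.2 _ hvmk
    have hadjv := hnCadj ⟨D, hD⟩
    have hτv := hτval (vC ⟨D, hD⟩)
    rw [hvmk] at hτv
    by_cases hP : Pr D
    · have hP2 := hP
      obtain ⟨h, hneq⟩ := hP2
      have hCeq : (⟨D, h⟩ : Cyc) = ⟨D, hD⟩ := Subtype.ext rfl
      rw [hCeq] at hneq
      rcases orient_dichotomy hσ0 hadjv hdegv with ⟨h1, h2⟩ | ⟨h1, h2⟩
      · rw [if_pos h1] at hneq
        rw [hτv, if_pos hP, if_neg h2]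
        cases hε : ε ⟨D, hD⟩
        · rfl
        · rw [hε] at hneq
          exact absurd rfl hneq
      · rw [if_neg h1] at hneq
        rw [hτv, if_pos hP, if_pos h2]
        cases hε : ε ⟨D, hD⟩
        · rw [hε] at hneq
          exact absurd rfl hneq
        · rfl
    · have hnP : (if σ0 (vC ⟨D, hD⟩) = nC ⟨D, hD⟩ then true else false) = ε ⟨D, hD⟩ := by
        by_contra hc
        exact hP ⟨hD, hc⟩
      rw [hτv, if_neg hP]
      exact hnP
  have hNat : Nat.card {σp : Equiv.Perm V // σp ∈ Finset.univ.filter (fun σ => es σ = E')} =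
      Nat.card (Cyc → Bool) := by
    apply Nat.card_eq_of_bijective
      (fun σp (C : Cyc) => (if σp.1 (vC C) = nC C then true else false))
    constructor
    · rintro ⟨σ1, hσ1⟩ ⟨σ2, hσ2⟩ hF
      rw [Finset.mem_filter] at hσ1 hσ2
      exact Subtype.ext (hinj σ1 σ2 hσ1.2 hσ2.2 (fun C => congrFun hF C))
    · intro ε
      obtain ⟨σ1, hes, hval⟩ := hsurj ε
      exact ⟨⟨σ1, Finset.mem_filter.2 ⟨Finset.mem_univ _, hes⟩⟩, funext hval⟩
  have h1 : (Finset.univ.filter fun σ : Equiv.Perm V => es σ = E').card =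
      Nat.card {σp : Equiv.Perm V // σp ∈ Finset.univ.filter (fun σ => es σ = E')} := by
    rw [Nat.card_eq_fintype_card, Fintype.card_coe]
  rw [h1, hNat, Nat.card_fun]
  have h2 : Nat.card Bool = 2 := by
    rw [Nat.card_eq_fintype_card, Fintype.card_bool]
  rw [h2]
  rfl

end FibCard

end HS


/-- The Harary–Sachs theorem: the coefficient of `λ^(n-d)` in the characteristic
polynomial of the adjacency matrix of a finite simple graph `G` is the sum, over all
elementary edge-subsets `E'` of `G` covering exactly `d` vertices, of
`(-1)^{c(E')} · 2^{z(E')}`. -/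
theorem harary_sachs {V : Type*} [Fintype V] [DecidableEq V]
    (G : SimpleGraph V) [DecidableRel G.Adj] (d : ℕ) (hd : d ≤ Fintype.card V) :
    (Matrix.charpoly (G.adjMatrix ℤ)).coeff (Fintype.card V - d) =
      ∑ E' ∈ G.edgeFinset.powerset.filter
          (fun E' => IsElementary E' ∧ Nat.card {v : V // ∃ e ∈ E', v ∈ e} = d),
        (-1 : ℤ) ^ numEdgeComponents E' * 2 ^ numCycleComponents E' := by
  classical
  rw [HS.partA G d hd]
  have hmaps : ∀ σ ∈ Finset.univ.filter
      (fun σ : Equiv.Perm V => σ.support.card = d ∧ ∀ i ∈ σ.support, G.Adj (σ i) i),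
      HS.es σ ∈ G.edgeFinset.powerset.filter
        (fun E' => IsElementary E' ∧ Nat.card {v : V // ∃ e ∈ E', v ∈ e} = d) := by
    intro σ hσ
    simp only [Finset.mem_filter, Finset.mem_univ, true_and] at hσ
    rw [Finset.mem_filter, Finset.mem_powerset]
    refine ⟨HS.es_subset_edgeFinset G σ hσ.2, HS.isElementary_es σ, ?_⟩
    rw [HS.card_covered_es σ]
    exact hσ.1
  rw [← Finset.sum_fiberwise_of_maps_to hmaps (fun σ => (-1 : ℤ) ^ d * (Equiv.Perm.sign σ : ℤ))]
  refine Finset.sum_congr rfl fun E' hE' => ?_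
  rw [Finset.mem_filter, Finset.mem_powerset] at hE'
  obtain ⟨hEsub, hel, hcov⟩ := hE'
  have hloop : ∀ e ∈ E', ¬ e.IsDiag := by
    intro e he
    have := hEsub he
    rw [SimpleGraph.mem_edgeFinset] at this
    exact SimpleGraph.not_isDiag_of_mem_edgeSet G this
  have hPfilter : (Finset.univ.filter
      (fun σ : Equiv.Perm V => σ.support.card = d ∧ ∀ i ∈ σ.support, G.Adj (σ i) i)).filter
        (fun σ => HS.es σ = E') = Finset.univ.filter (fun σ => HS.es σ = E') := by
    ext σ
    simp only [Finset.mem_filter, Finset.mem_univ, true_and]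
    constructor
    · rintro ⟨_, h⟩
      exact h
    · intro h
      refine ⟨⟨?_, ?_⟩, h⟩
      · have hc := HS.card_covered_es σ
        rw [h] at hc
        rw [← hc, hcov]
      · intro i hi
        have hmem : s(i, σ i) ∈ HS.es σ := Finset.mem_image.2 ⟨i, hi, rfl⟩
        rw [h] at hmem
        have hmem2 := hEsub hmem
        rw [SimpleGraph.mem_edgeFinset, SimpleGraph.mem_edgeSet] at hmem2
        exact hmem2.symm
  rw [hPfilter]
  have hterm : ∀ σ ∈ Finset.univ.filter (fun σ : Equiv.Perm V => HS.es σ = E'),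
      (-1 : ℤ) ^ d * (Equiv.Perm.sign σ : ℤ) = (-1 : ℤ) ^ numEdgeComponents E' := by
    intro σ hσ
    simp only [Finset.mem_filter, Finset.mem_univ, true_and] at hσ
    have hsupp : σ.support.card = d := by
      have hc := HS.card_covered_es σ
      rw [hσ] at hc
      rw [← hc, hcov]
    have hsgn := HS.sign_es σ
    rw [hσ, hsupp] at hsgn
    rw [hsgn, pow_add, ← mul_assoc, ← pow_add]
    rw [Even.neg_one_pow ⟨d, rfl⟩, one_mul]
  rw [Finset.sum_congr rfl hterm, Finset.sum_const, HS.fib_card hloop hel, nsmul_eq_mul]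
  push_cast
  rw [mul_comm]
end

section
/- Let G be a finite simple graph on a vertex type V with n = |V| and n ≥ 3, and let A be its adjacency matrix over ℤ. The coefficient of λ^{n-3} in the characteristic polynomial det(λI − A) equals −2 times the number of triangles of G (i.e., −2 times the number of 3-element cliques of G). -/
open Finset Equiv Equiv.Perm Polynomial Matrix

section Aux

variable {V : Type*} [Fintype V] [DecidableEq V]

/-- The permutations with support exactly `{a, b, c}` are the two 3-cycles. -/
lemma filter_support_eq_triple {a b c : V} (hab : a ≠ b) (hac : a ≠ c) (hbc : b ≠ c) :
    (Finset.univ.filter fun σ : Perm V => σ.support = ({a, b, c} : Finset V)) =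
      {swap a b * swap a c, swap a c * swap a b} := by
  ext σ
  simp only [Finset.mem_filter, Finset.mem_univ, true_and, Finset.mem_insert,
    Finset.mem_singleton]
  constructor
  · intro hs
    have hmem : ∀ x : V, x ∈ σ.support → σ x ∈ ({a, b, c} : Finset V) := by
      intro x hx
      rw [← hs]; exact Equiv.Perm.apply_mem_support.2 hx
    have haS : a ∈ σ.support := by rw [hs]; simp
    have hbS : b ∈ σ.support := by rw [hs]; simp
    have hcS : c ∈ σ.support := by rw [hs]; simp
    have ha : σ a ≠ a := Equiv.Perm.mem_support.1 haS
    have hb : σ b ≠ b := Equiv.Perm.mem_support.1 hbS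
    have hc : σ c ≠ c := Equiv.Perm.mem_support.1 hcS
    have hσa := hmem a haS
    have hσb := hmem b hbS
    have hσc := hmem c hcS
    simp only [Finset.mem_insert, Finset.mem_singleton] at hσa hσb hσc
    have hout : ∀ x : V, x ≠ a → x ≠ b → x ≠ c → σ x = x := by
      intro x hxa hxb hxc
      by_contra hne
      have : x ∈ σ.support := Equiv.Perm.mem_support.2 hne
      rw [hs] at this
      simp only [Finset.mem_insert, Finset.mem_singleton] at this
      tauto
    rcases hσa with h1 | h1 | h1
    · exact absurd h1 ha
    · -- σ a = b, so σ b = c, σ c = a, σ = swap a c * swap a b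
      have h2 : σ b = c := by
        rcases hσb with h | h | h
        · exfalso
          rcases hσc with h' | h' | h'
          · exact hbc (σ.injective (h'.trans h.symm)).symm
          · exact hac (σ.injective (h'.trans h1.symm)).symm
          · exact hc h'
        · exact absurd h hb
        · exact h
      have h3 : σ c = a := by
        rcases hσc with h | h | h
        · exact h
        · exact absurd (σ.injective (h.trans h1.symm)) (Ne.symm hac)
        · exact absurd h hc
      right
      ext x
      simp only [Perm.coe_mul, Function.comp_apply]
      rcases eq_or_ne x a with hx | hxa
      · subst hx
        rw [h1, swap_apply_left, swap_apply_of_ne_of_ne hab.symm hbc]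
      · rcases eq_or_ne x b with hx | hxb
        · subst hx
          rw [h2, swap_apply_right, swap_apply_left]
        · rcases eq_or_ne x c with hx | hxc
          · subst hx
            rw [h3, swap_apply_of_ne_of_ne (Ne.symm hac) (Ne.symm hbc), swap_apply_right]
          · rw [hout x hxa hxb hxc, swap_apply_of_ne_of_ne hxa hxb,
              swap_apply_of_ne_of_ne hxa hxc]
    · -- σ a = c, so σ c = b, σ b = a, σ = swap a b * swap a c
      have h2 : σ c = b := by
        rcases hσc with h | h | h
        · exfalso
          rcases hσb with h' | h' | h'
          · exact hbc (σ.injective (h'.trans h.symm))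
          · exact hb h'
          · exact hab (σ.injective (h'.trans h1.symm)).symm
        · exact h
        · exact absurd h hc
      have h3 : σ b = a := by
        rcases hσb with h | h | h
        · exact h
        · exact absurd h hb
        · exact absurd (σ.injective (h.trans h1.symm)) (Ne.symm hab)
      left
      ext x
      simp only [Perm.coe_mul, Function.comp_apply]
      rcases eq_or_ne x a with hx | hxa
      · subst hx
        rw [h1, swap_apply_left, swap_apply_of_ne_of_ne hac.symm (Ne.symm hbc)]
      · rcases eq_or_ne x b with hx | hxb
        · subst hx
          rw [h3, swap_apply_of_ne_of_ne hab.symm hbc, swap_apply_right]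
        · rcases eq_or_ne x c with hx | hxc
          · subst hx
            rw [h2, swap_apply_right, swap_apply_left]
          · rw [hout x hxa hxb hxc, swap_apply_of_ne_of_ne hxa hxc,
              swap_apply_of_ne_of_ne hxa hxb]
  · rintro (rfl | rfl)
    · have := Equiv.Perm.support_swap_mul_swap (x := b) (y := a) (z := c)
        (by simp [Ne.symm hab, hbc, hac])
      rw [Equiv.swap_comm a b, this, Finset.insert_comm]
    · have := Equiv.Perm.support_swap_mul_swap (x := c) (y := a) (z := b)
        (by simp [Ne.symm hac, Ne.symm hbc, hab])
      rw [Equiv.swap_comm a c, this]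
      ext x; simp; tauto

/-- For a permutation with support of size 3, the product of adjacency-matrix entries along
the cycle is 1 if the support is a triangle and 0 otherwise. -/
lemma prod_adj_support {G : SimpleGraph V} [DecidableRel G.Adj] {σ : Perm V}
    (h3 : σ.support.card = 3) :
    (∏ i ∈ σ.support, (G.adjMatrix ℤ) (σ i) i)
      = if σ.support ∈ G.cliqueFinset 3 then 1 else 0 := by
  by_cases hcl : σ.support ∈ G.cliqueFinset 3
  · rw [if_pos hcl]
    refine Finset.prod_eq_one fun i hi => ?_
    have hclique := (SimpleGraph.mem_cliqueFinset_iff.1 hcl).1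
    have hadj : G.Adj (σ i) i :=
      hclique (Finset.mem_coe.2 (Equiv.Perm.apply_mem_support.2 hi)) (Finset.mem_coe.2 hi)
        (Equiv.Perm.mem_support.1 hi)
    simp [SimpleGraph.adjMatrix_apply, hadj]
  · rw [if_neg hcl]
    by_contra hne
    apply hcl
    have hadj : ∀ i ∈ σ.support, G.Adj (σ i) i := by
      intro i hi
      have hfac := Finset.prod_ne_zero_iff.1 hne i hi
      by_contra hni
      simp [SimpleGraph.adjMatrix_apply, hni] at hfac
    have ht : σ.IsThreeCycle := card_support_eq_three_iff.1 h3
    have hord : σ ^ 3 = 1 := by rw [← ht.orderOf]; exact pow_orderOf_eq_one σ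
    have h3x : ∀ x : V, σ (σ (σ x)) = x := by
      intro x
      have := congrArg (fun τ : Perm V => τ x) hord
      simpa [pow_succ, Equiv.Perm.mul_apply] using this
    refine SimpleGraph.mem_cliqueFinset_iff.2 ((SimpleGraph.isNClique_iff G).2 ⟨?_, h3⟩)
    intro x hx y hy hxy
    have hx' : x ∈ σ.support := Finset.mem_coe.1 hx
    have hy' : y ∈ σ.support := Finset.mem_coe.1 hy
    have hne1 : σ x ≠ x := Equiv.Perm.mem_support.1 hx'
    have hx2 : σ x ∈ σ.support := Equiv.Perm.apply_mem_support.2 hx'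
    have hne2 : σ (σ x) ≠ σ x := Equiv.Perm.mem_support.1 hx2
    have hne3 : σ (σ x) ≠ x := by
      intro h
      have := congrArg σ h
      rw [h3x x] at this
      exact hne1 this.symm
    have hsub : ({x, σ x, σ (σ x)} : Finset V) ⊆ σ.support := by
      intro z hz
      simp only [Finset.mem_insert, Finset.mem_singleton] at hz
      rcases hz with rfl | rfl | rfl
      · exact hx'
      · exact hx2
      · exact Equiv.Perm.apply_mem_support.2 hx2
    have hm1 : x ∉ ({σ x, σ (σ x)} : Finset V) := by
      simp only [Finset.mem_insert, Finset.mem_singleton]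
      push_neg
      exact ⟨Ne.symm hne1, Ne.symm hne3⟩
    have hm2 : σ x ∉ ({σ (σ x)} : Finset V) := by
      simp only [Finset.mem_singleton]
      exact Ne.symm hne2
    have hcarde : ({x, σ x, σ (σ x)} : Finset V).card = 3 := by
      rw [Finset.card_insert_of_notMem hm1, Finset.card_insert_of_notMem hm2,
        Finset.card_singleton]
    have heq : σ.support = ({x, σ x, σ (σ x)} : Finset V) :=
      (Finset.eq_of_subset_of_card_le hsub (by rw [h3, hcarde])).symm
    rw [heq] at hy'
    simp only [Finset.mem_insert, Finset.mem_singleton] at hy'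
    rcases hy' with rfl | rfl | rfl
    · exact absurd rfl hxy
    · exact (hadj x hx').symm
    · have := hadj (σ (σ x)) (Equiv.Perm.apply_mem_support.2 hx2)
      rwa [h3x x] at this

end Aux

/-- Codegree-3 case of the Harary–Sachs theorem: the coefficient of `λ^(n-3)` in the
characteristic polynomial of the adjacency matrix of a finite simple graph `G` equals
`-2` times the number of triangles (3-element cliques) of `G`. -/
theorem charpoly_coeff_sub_three {V : Type*} [Fintype V] [DecidableEq V]
    (G : SimpleGraph V) [DecidableRel G.Adj] (hn : 3 ≤ Fintype.card V) :
    (Matrix.charpoly (G.adjMatrix ℤ)).coeff (Fintype.card V - 3) =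
      -2 * ((G.cliqueFinset 3).card : ℤ) := by
  classical
  rw [Matrix.charpoly, Matrix.det_apply', Polynomial.finset_sum_coeff]
  have key : ∀ σ : Perm V,
      (((Equiv.Perm.sign σ : ℤ) : ℤ[X]) * ∏ i : V, charmatrix (G.adjMatrix ℤ) (σ i) i).coeff
          (Fintype.card V - 3)
        = if σ.support ∈ G.cliqueFinset 3 then (-1 : ℤ) else 0 := by
    intro σ
    have hfact : (∏ i : V, charmatrix (G.adjMatrix ℤ) (σ i) i)
        = C (∏ i ∈ σ.support, -((G.adjMatrix ℤ) (σ i) i)) * X ^ (σ.supportᶜ.card) := by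
      rw [← Finset.prod_mul_prod_compl σ.support]
      congr 1
      · rw [map_prod]
        exact Finset.prod_congr rfl fun i hi => by
          rw [charmatrix_apply_ne _ _ _ (Equiv.Perm.mem_support.1 hi), map_neg]
      · rw [← Finset.prod_const]
        refine Finset.prod_congr rfl fun i hi => ?_
        have hfix : σ i = i := Equiv.Perm.notMem_support.1 (Finset.mem_compl.1 hi)
        rw [hfix, charmatrix_apply_eq]
        simp [SimpleGraph.adjMatrix_apply]
    rw [hfact, ← Polynomial.C_eq_intCast, ← mul_assoc, ← C_mul, coeff_C_mul, coeff_X_pow,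
      Finset.card_compl, Int.cast_id]
    by_cases h3 : σ.support.card = 3
    · have ht : σ.IsThreeCycle := card_support_eq_three_iff.1 h3
      have hsign : (Equiv.Perm.sign σ : ℤ) = 1 := by rw [ht.sign]; rfl
      rw [h3, if_pos rfl, mul_one, hsign, one_mul]
      have hneg : (∏ i ∈ σ.support, -((G.adjMatrix ℤ) (σ i) i))
          = -(∏ i ∈ σ.support, (G.adjMatrix ℤ) (σ i) i) := by
        rw [show (-(∏ i ∈ σ.support, (G.adjMatrix ℤ) (σ i) i))
            = (-1) ^ σ.support.card * ∏ i ∈ σ.support, (G.adjMatrix ℤ) (σ i) i by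
          rw [h3]; ring]
        rw [← Finset.prod_const, ← Finset.prod_mul_distrib]
        exact Finset.prod_congr rfl fun i _ => by ring
      rw [hneg, prod_adj_support h3]
      split_ifs <;> norm_num
    · have hle : σ.support.card ≤ Fintype.card V := Finset.card_le_univ _
      rw [if_neg (by omega), mul_zero, if_neg fun h =>
        h3 (SimpleGraph.mem_cliqueFinset_iff.1 h).card_eq]
  rw [Finset.sum_congr rfl fun σ _ => key σ, Finset.sum_ite, Finset.sum_const,
    Finset.sum_const_zero, add_zero, nsmul_eq_mul]
  have hfib : (Finset.univ.filter fun σ : Perm V => σ.support ∈ G.cliqueFinset 3).card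
      = 2 * (G.cliqueFinset 3).card := by
    rw [Finset.card_eq_sum_card_fiberwise (f := Equiv.Perm.support) (t := G.cliqueFinset 3)
      (s := Finset.univ.filter fun σ : Perm V => σ.support ∈ G.cliqueFinset 3)
      (fun σ hσ => (Finset.mem_filter.1 (Finset.mem_coe.1 hσ)).2)]
    rw [Finset.sum_congr rfl fun s hs => ?_, Finset.sum_const, smul_eq_mul, mul_comm]
    obtain ⟨a, b, c, hab, hac, hbc, rfl⟩ :=
      Finset.card_eq_three.1 (SimpleGraph.mem_cliqueFinset_iff.1 hs).card_eq
    have hff : ((Finset.univ.filter fun σ : Perm V => σ.support ∈ G.cliqueFinset 3).filter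
          fun σ => σ.support = ({a, b, c} : Finset V))
        = Finset.univ.filter fun σ : Perm V => σ.support = ({a, b, c} : Finset V) := by
      ext σ
      simp only [Finset.mem_filter, Finset.mem_univ, true_and]
      exact ⟨fun h => h.2, fun h => ⟨h ▸ hs, h⟩⟩
    rw [hff, filter_support_eq_triple hab hac hbc]
    have hd : swap a b * swap a c ≠ swap a c * swap a b := by
      intro h
      have := congrArg (fun τ : Perm V => τ a) h
      simp only [Perm.coe_mul, Function.comp_apply, swap_apply_left] at this
      rw [swap_apply_of_ne_of_ne (Ne.symm hac) (Ne.symm hbc),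
        swap_apply_of_ne_of_ne (Ne.symm hab) hbc] at this
      exact hbc this.symm
    rw [Finset.card_insert_of_notMem (by simpa using hd), Finset.card_singleton]
  rw [hfib]
  push_cast
  ring
end

section
/- For every natural number n and every permutation σ of Fin (n+1), letting M_σ be the permutation matrix of σ over ℚ and J the (n+1)×(n+1) all-ones matrix over ℚ, the following identity of polynomials in ℚ[X] holds: (X − 1) · charpoly(M_σ − J) = (X + n) · charpoly(M_σ). Equivalently, the multiset of eigenvalues of M_σ − J is obtained from that of M_σ by removing one copy of the eigenvalue 1 and adjoining the eigenvalue −n. -/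
/-- The permutation matrix of `σ`, with `(M_σ)_{ij} = 1` iff `σ j = i`. -/
def permMatrixQ (m : ℕ) (σ : Equiv.Perm (Fin m)) : Matrix (Fin m) (Fin m) ℚ :=
  Matrix.of fun i j => if σ j = i then 1 else 0

/-- The `m × m` all-ones matrix over `ℚ`. -/
def allOnesQ (m : ℕ) : Matrix (Fin m) (Fin m) ℚ :=
  Matrix.of fun _ _ => 1

open Polynomial Matrix

/-- Lemma 3.5 of the paper, in characteristic-polynomial form: the spectrum of
`M_σ − J` is that of `M_σ` with one copy of the eigenvalue `1` removed and the
eigenvalue `−n` adjoined. -/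
theorem charpoly_permMatrix_sub_allOnes (n : ℕ) (σ : Equiv.Perm (Fin (n + 1))) :
    (Polynomial.X - 1) * Matrix.charpoly (permMatrixQ (n + 1) σ - allOnesQ (n + 1)) =
      (Polynomial.X + (n : Polynomial ℚ)) * Matrix.charpoly (permMatrixQ (n + 1) σ) := by
  have hm : ∀ j, ∑ i, permMatrixQ (n + 1) σ i j = 1 := by
    intro j; simp [permMatrixQ]
  set M := permMatrixQ (n + 1) σ with hM
  set A := charmatrix M with hA
  set B := charmatrix (M - allOnesQ (n + 1)) with hB
  have hAB : ∀ i j, B i j = A i j + 1 := by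
    intro i j
    simp [hA, hB, charmatrix_apply, allOnesQ, Matrix.sub_apply]
    ring
  have hAsum : ∀ j, ∑ i, A i j = X - 1 := by
    intro j
    have : ∑ i, A i j = (∑ i, (Matrix.diagonal fun _ : Fin (n + 1) => (X : ℚ[X])) i j)
        - C (∑ i, M i j) := by
      simp [hA, charmatrix_apply, Finset.sum_sub_distrib, map_sum]
    rw [this, hm j]
    simp [Matrix.diagonal_apply, Finset.sum_ite_eq]
  have hBsum : ∀ j, ∑ i, B i j = X + (n : ℚ[X]) := by
    intro j
    have : ∑ i, B i j = (∑ i, A i j) + (n + 1) := by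
      simp [hAB, Finset.sum_add_distrib]
    rw [this, hAsum j]
    ring
  have key : ∀ (D : Matrix (Fin (n + 1)) (Fin (n + 1)) ℚ[X]) (s : ℚ[X]),
      (∀ j, ∑ i, D i j = s) → D.det = s * (D.updateRow 0 (fun _ => 1)).det := by
    intro D s hs
    have h1 := Matrix.det_updateRow_sum D 0 (fun _ => (1 : ℚ[X]))
    simp only [one_smul, smul_eq_mul, one_mul] at h1
    have h2 : (∑ k, D k) = s • (fun _ => (1 : ℚ[X])) := by
      funext j
      refine (Finset.sum_apply j Finset.univ (fun k => D k)).trans ?_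
      simpa using hs j
    rw [h2, Matrix.det_updateRow_smul] at h1
    exact h1.symm
  have e1 : A.det = (X - 1) * ((A.updateRow 0 fun _ => 1).det) := key A _ hAsum
  have e2 : B.det = (X + (n : ℚ[X])) * ((B.updateRow 0 fun _ => 1).det) := key B _ hBsum
  have e3 : (B.updateRow 0 fun _ => 1).det = (A.updateRow 0 fun _ => 1).det := by
    apply det_eq_of_forall_row_eq_smul_add_const
      (fun i => if i = 0 then 0 else 1) 0 (by simp)
    intro i j
    rcases eq_or_ne i 0 with h | h <;> simp [h, Matrix.updateRow_apply, hAB]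
  show (X - 1) * B.det = (X + (n : ℚ[X])) * A.det
  rw [e1, e2, e3]; ring
end

section
/- Let n be a natural number, σ a permutation of Fin (n+1), M_σ its permutation matrix over ℂ, and J the (n+1)×(n+1) all-ones matrix over ℂ. Let t be the number of orbits of σ acting on Fin (n+1) (equivalently, the number of cycles of σ, counting fixed points as cycles of length 1). Then the eigenspace of the linear endomorphism of ℂ^{n+1} given by M_σ − J for the eigenvalue 1 has dimension at least t − 1. -/
def permMatrixC (m : ℕ) (σ : Equiv.Perm (Fin m)) : Matrix (Fin m) (Fin m) ℂ :=
  Matrix.of fun i j => if σ j = i then 1 else 0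

def allOnesC (m : ℕ) : Matrix (Fin m) (Fin m) ℂ :=
  Matrix.of fun _ _ => 1

lemma pow_invariant (n : ℕ) (σ : Equiv.Perm (Fin (n + 1))) (x : Fin (n+1) → ℂ)
    (hx : ∀ i, x (σ i) = x i) :
    ∀ (k : ℤ) (i : Fin (n+1)), x ((σ ^ k) i) = x i := by
  intro k
  induction k using Int.induction_on with
  | zero => simp
  | succ k ih =>
      intro i
      have : (σ ^ ((k : ℤ) + 1)) i = (σ ^ (k:ℤ)) (σ i) := by
        rw [zpow_add_one]; rfl
      rw [this, ih, hx]
  | pred k ih =>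
      intro i
      have h1 : (σ ^ (-(k : ℤ) - 1)) i = (σ ^ (-(k:ℤ))) (σ⁻¹ i) := by
        rw [zpow_sub_one]; rfl
      have hinv : x (σ⁻¹ i) = x i := by
        conv_rhs => rw [← Equiv.apply_symm_apply σ i]
        exact (hx (σ⁻¹ i)).symm ▸ rfl
      rw [h1, ih, hinv]

/-- Geometric-multiplicity claim inside Lemma 3.5: if `σ` has `t` orbits (cycles,
counting fixed points) on `Fin (n+1)`, then the eigenspace of `M_σ − J` for the
eigenvalue `1` has dimension at least `t − 1`. -/
theorem one_eigenspace_dim_ge (n : ℕ) (σ : Equiv.Perm (Fin (n + 1))) :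
    Nat.card (Quotient (MulAction.orbitRel (Subgroup.zpowers σ) (Fin (n + 1)))) - 1 ≤
      Module.finrank ℂ
        (Module.End.eigenspace
          (Matrix.mulVecLin (permMatrixC (n + 1) σ - allOnesC (n + 1))) 1) := by
  classical
  set Q := Quotient (MulAction.orbitRel (Subgroup.zpowers σ) (Fin (n + 1))) with hQ
  have : Finite Q := Quotient.finite _
  haveI : Fintype Q := Fintype.ofFinite Q
  -- sum functional
  let L : (Fin (n+1) → ℂ) →ₗ[ℂ] ℂ := ∑ i, LinearMap.proj i
  have hL : ∀ x : Fin (n+1) → ℂ, L x = ∑ i, x i := by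
    intro x; simp [L]
  -- invariant subspace F
  let T : (Fin (n+1) → ℂ) →ₗ[ℂ] (Fin (n+1) → ℂ) := LinearMap.funLeft ℂ ℂ σ
  let F : Submodule ℂ (Fin (n+1) → ℂ) := LinearMap.ker (T - LinearMap.id)
  have hF : ∀ x : Fin (n+1) → ℂ, x ∈ F ↔ ∀ i, x (σ i) = x i := by
    intro x
    constructor
    · intro h i
      have := congrFun (LinearMap.mem_ker.mp h) i
      simpa [T, LinearMap.funLeft, sub_eq_zero] using this
    · intro h
      refine LinearMap.mem_ker.mpr ?_
      funext i
      simpa [T, LinearMap.funLeft, sub_eq_zero] using h i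
  -- ψ : (Q → ℂ) →ₗ (Fin → ℂ)
  let ψ : (Q → ℂ) →ₗ[ℂ] (Fin (n+1) → ℂ) := LinearMap.funLeft ℂ ℂ (Quotient.mk _)
  have hψinj : Function.Injective ψ :=
    LinearMap.funLeft_injective_of_surjective ℂ ℂ _ (Quotient.mk''_surjective)
  have hrange : LinearMap.range ψ = F := by
    apply le_antisymm
    · rintro _ ⟨g, rfl⟩
      rw [hF]
      intro i
      show g ⟦σ i⟧ = g ⟦i⟧
      congr 1
      refine Quotient.sound ?_
      change σ i ∈ MulAction.orbit (Subgroup.zpowers σ) i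
      exact ⟨⟨σ, Subgroup.mem_zpowers σ⟩, rfl⟩
    · intro x hx
      rw [hF] at hx
      refine ⟨Quotient.lift x ?_, ?_⟩
      · intro a b hab
        change a ∈ MulAction.orbit (Subgroup.zpowers σ) b at hab
        obtain ⟨⟨g, hg⟩, hgb⟩ := hab
        obtain ⟨k, rfl⟩ := hg
        have := pow_invariant n σ x hx k b
        rw [← hgb]
        exact this
      · funext i; rfl
  have hFrank : Module.finrank ℂ F = Nat.card Q := by
    rw [← hrange, LinearMap.finrank_range_of_inj hψinj,
      Module.finrank_fintype_fun_eq_card, Nat.card_eq_fintype_card]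
  -- restrict L to F
  let L' : F →ₗ[ℂ] ℂ := L.domRestrict F
  have hker : Module.finrank ℂ F ≤ Module.finrank ℂ (LinearMap.ker L') + 1 := by
    have := LinearMap.finrank_range_add_finrank_ker L'
    have h2 : Module.finrank ℂ (LinearMap.range L') ≤ 1 := by
      simpa using Submodule.finrank_le (LinearMap.range L')
    omega
  -- map ker L' into the eigenspace
  let E := Module.End.eigenspace
      (Matrix.mulVecLin (permMatrixC (n + 1) σ - allOnesC (n + 1))) (1 : ℂ)
  have hmem : ∀ x : Fin (n+1) → ℂ, x ∈ F → L x = 0 → x ∈ E := by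
    intro x hxF hxL
    rw [hF] at hxF
    rw [Module.End.mem_eigenspace_iff, one_smul]
    funext i
    have hsum : ∑ j, x j = 0 := by rw [← hL]; exact hxL
    have key : ∀ j, (permMatrixC (n+1) σ - allOnesC (n+1)) i j * x j
        = (if σ j = i then x j else 0) - x j := by
      intro j
      by_cases h : σ j = i <;> simp [permMatrixC, allOnesC, h, sub_mul]
    calc Matrix.mulVecLin (permMatrixC (n + 1) σ - allOnesC (n + 1)) x i
        = ∑ j, (permMatrixC (n+1) σ - allOnesC (n+1)) i j * x j := rfl
      _ = ∑ j, ((if σ j = i then x j else 0) - x j) := by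
          exact Finset.sum_congr rfl fun j _ => key j
      _ = (∑ j, if σ j = i then x j else 0) - ∑ j, x j := Finset.sum_sub_distrib _ _
      _ = x (σ⁻¹ i) - 0 := by
          rw [hsum]
          congr 1
          have hc : ∀ j : Fin (n+1), (σ j = i) ↔ (j = σ⁻¹ i) := by
            intro j
            constructor
            · intro h; rw [← h]; simp
            · intro h; rw [h]; simp
          calc (∑ j, if σ j = i then x j else 0)
              = ∑ j, if j = σ⁻¹ i then x j else 0 :=
                Finset.sum_congr rfl (fun j _ => by rw [if_congr (hc j) rfl rfl])
            _ = x (σ⁻¹ i) := by rw [Finset.sum_ite_eq' Finset.univ]; simp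
      _ = x i := by
          rw [sub_zero]
          conv_rhs => rw [← Equiv.apply_symm_apply σ i]
          exact (hxF (σ⁻¹ i)).symm
  -- conclude
  let φ : LinearMap.ker L' →ₗ[ℂ] E :=
    { toFun := fun y => ⟨(y : F), hmem _ (y : F).2 (LinearMap.mem_ker.mp y.2)⟩
      map_add' := fun a b => rfl
      map_smul' := fun c a => rfl }
  have hφinj : Function.Injective φ := by
    intro a b hab
    have h1 := Subtype.ext_iff.mp hab
    exact Subtype.ext (Subtype.ext h1)
  have hle : Module.finrank ℂ (LinearMap.ker L') ≤ Module.finrank ℂ E :=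
    LinearMap.finrank_le_finrank_of_injective hφinj
  show Nat.card Q - 1 ≤ Module.finrank ℂ E
  omega
end

section
/- Let k ≥ 1 be a natural number and let σ be a derangement of Fin (k+1) (a permutation with no fixed points). Let L = k·I + M_σ − J be the (k+1)×(k+1) matrix over ℚ, where M_σ is the permutation matrix of σ and J is the all-ones matrix. Then the determinant of the k×k matrix obtained from L by deleting its first row and first column equals (1/(k+1)²) · ∏_{ℓ ∈ cycleType(σ)} (k^ℓ + (−1)^{ℓ+1}), where the product runs over the multiset of cycle lengths of σ. -/
open Matrix Finset Equiv Equiv.Perm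

theorem det_minor_aux (n : ℕ) (B : Matrix (Fin (n+1)) (Fin (n+1)) ℚ) (m : ℚ)
    (hm : m = (n : ℚ) + 1)
    (hrow : ∀ i, ∑ j, B i j = m) (hcol : ∀ j, ∑ i, B i j = m) :
    B.det = m ^ 2 * ((Matrix.of fun i j => B i j - 1).submatrix Fin.succ Fin.succ).det := by
  have hm0 : m ≠ 0 := by rw [hm]; positivity
  set R : Matrix (Fin (n+1)) (Fin (n+1)) ℚ :=
    Matrix.of (fun i j => if i = 0 then 1 else if i = j then 1 else 0) with hR
  set C : Matrix (Fin (n+1)) (Fin (n+1)) ℚ :=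
    Matrix.of (fun i j => if j = 0 then 1 else if i = j then 1 else 0) with hC
  set D : Matrix (Fin (n+1)) (Fin (n+1)) ℚ :=
    Matrix.of (fun i j => if i = j then 1 else if i = 0 then -(1/m) else 0) with hD
  set G : Matrix (Fin (n+1)) (Fin (n+1)) ℚ :=
    Matrix.of (fun i j => if i = 0 then m else B i j) with hG
  set H : Matrix (Fin (n+1)) (Fin (n+1)) ℚ :=
    Matrix.of (fun i j => if j = 0 then (if i = 0 then m^2 else m) else
      (if i = 0 then m else B i j)) with hH
  set F : Matrix (Fin (n+1)) (Fin (n+1)) ℚ :=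
    Matrix.of (fun i j => if j = 0 then (if i = 0 then m^2 else m) else
      (if i = 0 then 0 else B i j - 1)) with hF
  have hRB : R * B = G := by
    ext i j
    rcases eq_or_ne i 0 with hi | hi
    · simp [hR, hG, Matrix.mul_apply, hi, hcol j]
    · simp [hR, hG, Matrix.mul_apply, hi]
  have hGC : G * C = H := by
    ext i j
    rcases eq_or_ne j 0 with hj | hj
    · rcases eq_or_ne i 0 with hi | hi
      · simp only [hG, hC, hH, Matrix.mul_apply, Matrix.of_apply, hi, hj, if_pos rfl,
          if_true, mul_ite, mul_one, mul_zero]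
        rw [Finset.sum_const, Finset.card_univ, Fintype.card_fin, hm, nsmul_eq_mul]
        push_cast
        ring
      · simp [hG, hC, hH, Matrix.mul_apply, hi, hj, hrow i]
    · simp [hG, hC, hH, Matrix.mul_apply, hj]
  have hD0 : ∀ l, D l (0 : Fin (n+1)) = if l = 0 then 1 else 0 := by
    intro l; rcases eq_or_ne l 0 with h | h <;> simp [hD, h]
  have hHD : H * D = F := by
    ext i j
    rcases eq_or_ne j 0 with hj | hj
    · subst hj
      rw [Matrix.mul_apply]
      simp only [hD0, mul_ite, mul_one, mul_zero, Finset.sum_ite_eq', Finset.mem_univ, if_true]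
      simp [hH, hF]
    · have key : ∀ l, H i l * D l j
          = (if l = j then H i j else 0) + (if l = 0 then (-(1/m)) * H i 0 else 0) := by
        intro l
        rcases eq_or_ne l j with h1 | h1
        · subst h1; simp [hD, hj]
        · rcases eq_or_ne l 0 with h2 | h2
          · subst h2
            simp [hD, h1, Ne.symm hj]
            ring
          · simp [hD, h1, h2]
      rw [Matrix.mul_apply]
      rw [Finset.sum_congr rfl fun l _ => key l, Finset.sum_add_distrib]
      simp only [Finset.sum_ite_eq', Finset.mem_univ, if_true]
      rcases eq_or_ne i 0 with hi | hi
      · simp only [hH, hF, Matrix.of_apply, hi, if_pos rfl, hj, if_neg hj, if_true, if_false]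
        field_simp
        ring
      · have hmm : -(1/m) * m = -1 := by field_simp
        simp only [hH, hF, Matrix.of_apply, if_neg hi, hj, if_neg hj, if_true, if_false]
        norm_num
        rw [inv_mul_cancel₀ hm0]
        ring
  have hdetR : R.det = 1 := by
    have ht : R.BlockTriangular id := by
      intro i j hij
      have hi0 : i ≠ 0 := fun h => by subst h; exact (Fin.not_lt_zero j) hij
      have hij' : i ≠ j := fun h => by subst h; exact lt_irrefl _ hij
      simp [hR, hi0, hij']
    rw [Matrix.det_of_upperTriangular ht]
    simp [hR]
  have hdetC : C.det = 1 := by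
    have ht : C.BlockTriangular OrderDual.toDual := by
      intro i j hij
      have hj0 : j ≠ 0 := fun h => by subst h; exact (Fin.not_lt_zero i) hij
      have hij' : i ≠ j := fun h => by subst h; exact lt_irrefl _ hij
      simp [hC, hj0, hij']
    rw [Matrix.det_of_lowerTriangular C ht]
    simp [hC]
  have hdetD : D.det = 1 := by
    have ht : D.BlockTriangular id := by
      intro i j hij
      have hi0 : i ≠ 0 := fun h => by subst h; exact (Fin.not_lt_zero j) hij
      have hij' : i ≠ j := fun h => by subst h; exact lt_irrefl _ hij
      simp [hD, hi0, hij']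
    rw [Matrix.det_of_upperTriangular ht]
    simp [hD]
  have hdetF : F.det = B.det := by
    have : F = R * B * C * D := by rw [hRB, hGC, hHD]
    rw [this, Matrix.det_mul, Matrix.det_mul, Matrix.det_mul, hdetR, hdetC, hdetD]
    ring
  have hexp : F.det = m ^ 2 * ((Matrix.of fun i j => B i j - 1).submatrix Fin.succ Fin.succ).det := by
    rw [Matrix.det_succ_row_zero]
    rw [Finset.sum_eq_single 0]
    · have h0 : F 0 0 = m ^ 2 := by simp [hF]
      have hsub : (F.submatrix Fin.succ (Fin.succAbove 0)) =
          ((Matrix.of fun i j => B i j - 1).submatrix Fin.succ Fin.succ) := by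
        ext i j
        simp [hF, Fin.succAbove_zero, Fin.succ_ne_zero]
      rw [h0, hsub]
      simp
    · intro b _ hb
      have : F 0 b = 0 := by simp [hF, hb]
      simp [this]
    · simp
  rw [← hdetF, hexp]

theorem det_k_one_add_perm (m k : ℕ) (σ : Equiv.Perm (Fin m)) (hσ : ∀ i, σ i ≠ i) :
    ((k : ℚ) • (1 : Matrix (Fin m) (Fin m) ℚ) + permMatrixQ m σ).det
      = ∏ c ∈ σ.cycleFactorsFinset,
          ((k : ℚ) ^ c.support.card + (-1) ^ (c.support.card + 1)) := by
  classical
  set A : Matrix (Fin m) (Fin m) ℚ := (k : ℚ) • 1 + permMatrixQ m σ with hAdef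
  have hA : ∀ i j, A i j = (if i = j then (k : ℚ) else 0) + (if σ j = i then 1 else 0) := by
    intro i j
    simp [hAdef, permMatrixQ, Matrix.one_apply, mul_ite]
  -- the product of entries along a permutation τ
  have hprod : ∀ τ : Equiv.Perm (Fin m), (∏ x, A (τ x) x) =
      if ∀ x, τ x = x ∨ τ x = σ x
      then (k : ℚ) ^ (univ.filter fun x => τ x = x).card else 0 := by
    intro τ
    split_ifs with h
    · have key : ∀ x, A (τ x) x = if τ x = x then (k : ℚ) else 1 := by
        intro x
        rcases h x with h1 | h1 <;> simp [hA, h1, hσ x]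
      rw [Finset.prod_congr rfl fun x _ => key x, Finset.prod_ite]
      simp
    · push_neg at h
      obtain ⟨x, h1, h2⟩ := h
      exact Finset.prod_eq_zero (Finset.mem_univ x) (by simp [hA, h1, Ne.symm h2])
  -- facts about subsets of the cycle factors
  have hsuppσ : σ.support = univ := Finset.eq_univ_iff_forall.2 fun x => mem_support.2 (hσ x)
  have hsum : ∑ c ∈ σ.cycleFactorsFinset, c.support.card = m := by
    have h1 := Equiv.Perm.sum_cycleType σ
    rw [Equiv.Perm.cycleType_def] at h1
    rw [show (∑ c ∈ σ.cycleFactorsFinset, c.support.card)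
        = (σ.cycleFactorsFinset.1.map (Finset.card ∘ Equiv.Perm.support)).sum from rfl]
    rw [h1, hsuppσ, Finset.card_univ, Fintype.card_fin]
  have hdisj : ∀ T : Finset (Equiv.Perm (Fin m)), T ⊆ σ.cycleFactorsFinset →
      (T : Set (Equiv.Perm (Fin m))).Pairwise Equiv.Perm.Disjoint := by
    intro T hT
    exact (σ.cycleFactorsFinset_pairwise_disjoint).mono (Finset.coe_subset.2 hT)
  set Φ : Finset (Equiv.Perm (Fin m)) → Equiv.Perm (Fin m) := fun T =>
    if h : (T : Set (Equiv.Perm (Fin m))).Pairwise Commute then T.noncommProd id h else 1 with hΦdef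
  have hΦ : ∀ T (hT : T ⊆ σ.cycleFactorsFinset),
      Φ T = T.noncommProd id ((hdisj T hT).mono' fun _ _ => Equiv.Perm.Disjoint.commute) := by
    intro T hT
    rw [hΦdef]
    exact dif_pos _
  have hcf : ∀ T (hT : T ⊆ σ.cycleFactorsFinset), (Φ T).cycleFactorsFinset = T := by
    intro T hT
    rw [Equiv.Perm.cycleFactorsFinset_eq_finset]
    refine ⟨fun f hf => (Equiv.Perm.mem_cycleFactorsFinset_iff.1 (hT hf)).1, hdisj T hT, ?_⟩
    exact (hΦ T hT).symm
  have hsupp : ∀ T (hT : T ⊆ σ.cycleFactorsFinset),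
      (Φ T).support = T.biUnion Equiv.Perm.support := by
    intro T hT
    rw [hΦ T hT]
    exact Equiv.Perm.support_noncommProd (hdisj T hT)
  have hmem : ∀ T (hT : T ⊆ σ.cycleFactorsFinset), ∀ x, Φ T x = x ∨ Φ T x = σ x := by
    intro T hT x
    by_cases hx : x ∈ (Φ T).support
    · right
      rw [hsupp T hT, Finset.mem_biUnion] at hx
      obtain ⟨c, hcT, hxc⟩ := hx
      have h1 : c ∈ (Φ T).cycleFactorsFinset := by rw [hcf T hT]; exact hcT
      have h2 := (Equiv.Perm.mem_cycleFactorsFinset_iff.1 h1).2 x hxc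
      have h3 := (Equiv.Perm.mem_cycleFactorsFinset_iff.1 (hT hcT)).2 x hxc
      rw [← h2, h3]
    · left
      exact Equiv.Perm.notMem_support.1 hx
  have hfixcard : ∀ τ : Equiv.Perm (Fin m),
      (univ.filter fun x => τ x = x).card = m - τ.support.card := by
    intro τ
    have : (univ.filter fun x => τ x = x) = τ.supportᶜ := by
      ext x; simp [Equiv.Perm.mem_support]
    rw [this, Finset.card_compl, Fintype.card_fin]
  -- now compute the determinant
  have step1 : A.det = ∑ τ ∈ univ.filter (fun τ : Equiv.Perm (Fin m) => ∀ x, τ x = x ∨ τ x = σ x),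
      ((Equiv.Perm.sign τ : ℤ) : ℚ) * (k : ℚ) ^ (univ.filter fun x => τ x = x).card := by
    rw [Matrix.det_apply', Finset.sum_filter]
    refine Finset.sum_congr rfl fun τ _ => ?_
    rw [hprod τ]
    split_ifs <;> simp
  rw [step1]
  rw [Finset.prod_congr rfl fun (c : Equiv.Perm (Fin m)) _ => add_comm ((k:ℚ) ^ c.support.card) _,
    Finset.prod_add]
  refine Finset.sum_nbij' (fun τ : Equiv.Perm (Fin m) => τ.cycleFactorsFinset) Φ ?_ ?_ ?_ ?_ ?_
  · -- maps contributing perms into powerset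
    intro τ hτ
    rw [Finset.mem_filter] at hτ
    rw [Finset.mem_powerset]
    intro c hc
    rw [Equiv.Perm.mem_cycleFactorsFinset_iff] at hc ⊢
    refine ⟨hc.1, fun a ha => ?_⟩
    have h1 := hc.2 a ha
    have h2 : τ a ≠ a := by
      intro h
      have ha' : c a ≠ a := Equiv.Perm.mem_support.1 ha
      rw [h1] at ha'
      exact ha' h
    rcases hτ.2 a with h3 | h3
    · exact absurd h3 h2
    · rw [h1, h3]
  · -- maps powerset into contributing perms
    intro T hT
    rw [Finset.mem_powerset] at hT
    rw [Finset.mem_filter]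
    exact ⟨Finset.mem_univ _, hmem T hT⟩
  · -- left inverse
    intro τ hτ
    exact (dif_pos (Equiv.Perm.cycleFactorsFinset_mem_commute τ)).trans
      (Equiv.Perm.cycleFactorsFinset_noncommProd τ)
  · -- right inverse
    intro T hT
    rw [Finset.mem_powerset] at hT
    exact hcf T hT
  · -- values agree
    intro τ hτ
    beta_reduce
    rw [Finset.mem_filter] at hτ
    have hT : τ.cycleFactorsFinset ⊆ σ.cycleFactorsFinset := by
      intro c hc
      rw [Equiv.Perm.mem_cycleFactorsFinset_iff] at hc ⊢
      refine ⟨hc.1, fun a ha => ?_⟩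
      have h1 := hc.2 a ha
      have h2 : τ a ≠ a := by
        intro h
        have ha' : c a ≠ a := Equiv.Perm.mem_support.1 ha
        rw [h1] at ha'
        exact ha' h
      rcases hτ.2 a with h3 | h3
      · exact absurd h3 h2
      · rw [h1, h3]
    have hΦτ : Φ τ.cycleFactorsFinset = τ :=
      (dif_pos (Equiv.Perm.cycleFactorsFinset_mem_commute τ)).trans
        (Equiv.Perm.cycleFactorsFinset_noncommProd τ)
    have hsign : ((Equiv.Perm.sign τ : ℤ) : ℚ)
        = ∏ c ∈ τ.cycleFactorsFinset, (-1 : ℚ) ^ (c.support.card + 1) := by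
      conv_lhs => rw [← hΦτ]
      rw [hΦ _ hT, Finset.map_noncommProd _ id _ Equiv.Perm.sign, Finset.noncommProd_eq_prod]
      have hval : ((∏ i ∈ τ.cycleFactorsFinset, Equiv.Perm.sign (id i) : ℤˣ) : ℤ)
          = ∏ i ∈ τ.cycleFactorsFinset, ((Equiv.Perm.sign (id i) : ℤ)) :=
        map_prod (Units.coeHom ℤ) _ _
      rw [hval, Int.cast_prod]
      refine Finset.prod_congr rfl fun c hc => ?_
      have hc' : c.IsCycle := (Equiv.Perm.mem_cycleFactorsFinset_iff.1 (hT hc)).1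
      rw [show Equiv.Perm.sign (id c) = Equiv.Perm.sign c from rfl, hc'.sign]
      rw [pow_succ]
      push_cast
      ring
    have hsc : τ.support.card = ∑ c ∈ τ.cycleFactorsFinset, c.support.card := by
      conv_lhs => rw [← hΦτ]
      rw [hsupp _ hT]
      exact Finset.card_biUnion fun c hc d hd hcd =>
        Equiv.Perm.Disjoint.disjoint_support (hdisj _ hT hc hd hcd)
    rw [hsign, hfixcard τ, hsc]
    congr 1
    rw [Finset.prod_pow_eq_pow_sum]
    congr 1
    have h3 : ∑ c ∈ σ.cycleFactorsFinset \ τ.cycleFactorsFinset, c.support.card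
        + ∑ c ∈ τ.cycleFactorsFinset, c.support.card
        = ∑ c ∈ σ.cycleFactorsFinset, c.support.card := Finset.sum_sdiff hT
    omega

/-- Kirchhoff-theorem computation in the proof of Theorem 3.4: for a derangement `σ` of
`Fin (k+1)`, the cofactor of the Laplacian `L = k·I + M_σ − J` obtained by deleting the
first row and column equals `(1/(k+1)²) · ∏_{ℓ ∈ cycleType σ} (k^ℓ + (−1)^{ℓ+1})`. -/
theorem det_laplacian_minor (k : ℕ) (hk : 1 ≤ k) (σ : Equiv.Perm (Fin (k + 1)))
    (hσ : ∀ i, σ i ≠ i) :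
    (((k : ℚ) • (1 : Matrix (Fin (k + 1)) (Fin (k + 1)) ℚ) + permMatrixQ (k + 1) σ -
          allOnesQ (k + 1)).submatrix Fin.succ Fin.succ).det =
      (1 / ((k : ℚ) + 1) ^ 2) *
        (σ.cycleType.map fun ℓ => (k : ℚ) ^ ℓ + (-1) ^ (ℓ + 1)).prod := by
  classical
  set B : Matrix (Fin (k+1)) (Fin (k+1)) ℚ := (k : ℚ) • 1 + permMatrixQ (k+1) σ with hBdef
  have hB : ∀ i j, B i j = (if i = j then (k : ℚ) else 0) + (if σ j = i then 1 else 0) := by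
    intro i j
    simp [hBdef, permMatrixQ, Matrix.one_apply, mul_ite]
  have hrow : ∀ i, ∑ j, B i j = (k : ℚ) + 1 := by
    intro i
    rw [Finset.sum_congr rfl fun j _ => hB i j, Finset.sum_add_distrib]
    congr 1
    · simp
    · have key : ∀ j : Fin (k+1), (if σ j = i then (1:ℚ) else 0) = if j = σ⁻¹ i then 1 else 0 := by
        intro j
        rcases eq_or_ne (σ j) i with h | h
        · have h2 : j = σ⁻¹ i := by rw [← h]; simp
          simp [h, h2]
        · have h2 : j ≠ σ⁻¹ i := fun hh => h (by rw [hh]; simp)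
          simp [h]; exact h2
      rw [Finset.sum_congr rfl fun j _ => key j]
      simp
  have hcol : ∀ j, ∑ i, B i j = (k : ℚ) + 1 := by
    intro j
    rw [Finset.sum_congr rfl fun i _ => hB i j, Finset.sum_add_distrib]
    congr 1 <;> simp
  have haux := det_minor_aux k B ((k : ℚ) + 1) rfl hrow hcol
  have hM : (Matrix.of fun i j => B i j - 1)
      = ((k : ℚ) • (1 : Matrix (Fin (k + 1)) (Fin (k + 1)) ℚ) + permMatrixQ (k + 1) σ -
          allOnesQ (k + 1)) := by
    ext i j
    simp [hBdef, allOnesQ, Matrix.sub_apply]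
  rw [hM] at haux
  have hmain := det_k_one_add_perm (k+1) k σ hσ
  have hct : (σ.cycleType.map fun ℓ => (k : ℚ) ^ ℓ + (-1) ^ (ℓ + 1)).prod
      = ∏ c ∈ σ.cycleFactorsFinset,
          ((k : ℚ) ^ c.support.card + (-1) ^ (c.support.card + 1)) := by
    rw [Equiv.Perm.cycleType_def, Multiset.map_map]
    rfl
  have hm0 : ((k : ℚ) + 1) ≠ 0 := by positivity
  rw [hct, ← hmain, hBdef.symm, haux]
  field_simp
  rfl
end

section
/- Let k ≥ 1 be a natural number. Then, as elements of ℚ: ∑_{σ} ∏_{ℓ ∈ cycleType(σ)} (k^ℓ + (−1)^{ℓ+1}) = ∑_{p} [ (k+1)! / ((∏_{i ∈ p} i) · (∏_{j ∈ support(p)} (multiplicity of j in p)!)) ] · ∏_{i ∈ p} (k^i + (−1)^{i+1}), where the left sum runs over all derangements σ of Fin (k+1), and the right sum runs over all partitions p of k+1 into parts each of size at least 2; in each product over p the parts are counted with multiplicity, and the second product in the weight runs over the distinct part sizes j of p. -/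
section AuxiliaryCycleCounting

open Equiv Equiv.Perm Finset List

attribute [local instance] Classical.propDecidable

variable {α : Type} [Fintype α] [DecidableEq α]

theorem card_cycles (a : α) (ℓ : ℕ) (hl2 : 2 ≤ ℓ) :
    (Finset.univ.filter fun c : Perm α =>
        (c.IsCycle ∧ a ∈ c.support) ∧ c.support.card = ℓ).card =
      (Fintype.card α - 1).descFactorial (ℓ - 1) := by
  have hcard : Fintype.card {x : α // x ≠ a} = Fintype.card α - 1 := by
    simp only [ne_eq]
    rw [Fintype.card_subtype_compl, Fintype.card_subtype_eq]
  rw [← hcard, ← Fintype.card_fin (ℓ - 1), ← Fintype.card_embedding_eq, ← Finset.card_univ]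
  set L : (Fin (ℓ - 1) ↪ {x : α // x ≠ a}) → List α :=
    fun e => a :: List.ofFn (fun i => (e i : α)) with hL
  have hnd : ∀ e, (L e).Nodup := by
    intro e
    refine List.nodup_cons.mpr ⟨?_, ?_⟩
    · intro h
      rw [List.mem_ofFn] at h
      obtain ⟨i, hi⟩ := h
      exact (e i).2 hi
    · exact List.nodup_ofFn.mpr (Subtype.val_injective.comp e.injective)
  have hlen : ∀ e, (L e).length = ℓ := by
    intro e; simp only [hL, List.length_cons, List.length_ofFn]; omega
  have hne : ∀ (e) (x : α), L e ≠ [x] := by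
    intro e x h
    have := congrArg List.length h
    rw [hlen] at this
    simp at this; omega
  have hsupp : ∀ e, (formPerm (L e)).support = (L e).toFinset :=
    fun e => support_formPerm_of_nodup _ (hnd e) (hne e)
  symm
  apply Finset.card_bij (fun e _ => formPerm (L e))
  · -- maps to
    intro e _
    simp only [Finset.mem_filter, Finset.mem_univ, true_and]
    refine ⟨⟨isCycle_formPerm (hnd e) (by rw [hlen]; exact hl2), ?_⟩, ?_⟩
    · rw [hsupp e, List.mem_toFinset]; exact List.mem_cons_self
    · rw [hsupp e, List.toFinset_card_of_nodup (hnd e), hlen]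
  · -- injective
    intro e₁ _ e₂ _ h
    have hpow : ∀ (e : Fin (ℓ - 1) ↪ {x : α // x ≠ a}) (i : Fin (ℓ - 1)),
        (formPerm (L e) ^ ((i : ℕ) + 1)) a = (e i : α) := by
      intro e i
      have hi := i.isLt
      rw [hL]
      rw [List.formPerm_pow_apply_head a _ (hnd e)]
      simp only [List.length_cons, List.length_ofFn,
        Nat.mod_eq_of_lt (show (i : ℕ) + 1 < ℓ - 1 + 1 by omega)]
      simp
    ext i
    have : (e₁ i : α) = (e₂ i : α) := by rw [← hpow e₁ i, ← hpow e₂ i, h]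
    exact this
  · -- surjective
    intro c hc
    simp only [Finset.mem_filter, Finset.mem_univ, true_and] at hc
    obtain ⟨⟨hcyc, ha⟩, hcl⟩ := hc
    have hca : c a ≠ a := mem_support.mp ha
    have hceq : c.cycleOf a = c := hcyc.cycleOf_eq hca
    have hlenl : (toList c a).length = ℓ := by rw [Equiv.Perm.length_toList, hceq, hcl]
    have hndl := nodup_toList c a
    have hinj := List.nodup_iff_injective_get.mp hndl
    have hget0 : (toList c a).get ⟨0, by omega⟩ = a := by simpa using toList_getElem_zero (p := c) (x := a) ha
    have hgetne : ∀ (i : ℕ) (hi : i + 1 < (toList c a).length),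
        (toList c a).get ⟨i + 1, hi⟩ ≠ a := by
      intro i hi h
      have := hinj (a₁ := ⟨i + 1, hi⟩) (a₂ := ⟨0, by omega⟩) (h.trans hget0.symm)
      simpa using this
    set f : Fin (ℓ - 1) → {x : α // x ≠ a} :=
      fun i => ⟨(toList c a).get ⟨(i : ℕ) + 1, by have := i.isLt; omega⟩, hgetne _ _⟩ with hf
    have hfinj : Function.Injective f := by
      intro i j hij
      have := hinj (congrArg Subtype.val hij)
      simpa [Fin.ext_iff] using this
    refine ⟨⟨f, hfinj⟩, Finset.mem_univ _, ?_⟩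
    have hLe : L ⟨f, hfinj⟩ = toList c a := by
      refine List.ext_getElem (by rw [hlen, hlenl]) ?_
      intro k hk1 hk2
      match k with
      | 0 =>
        simp only [hL, List.getElem_cons_zero]
        simpa [List.get_eq_getElem] using hget0.symm
      | Nat.succ k =>
        simp only [hL, List.getElem_cons_succ, List.getElem_ofFn]
        simp [hf, List.get_eq_getElem]
    rw [hLe, formPerm_toList, hceq]


theorem fiber_card (a : α) (m : Multiset ℕ)
    (c : Perm α) (hc : c.IsCycle) (ha : a ∈ c.support) (hcm : c.support.card ∈ m) :
    (((Finset.univ.filter fun σ : Perm α => σ.cycleType = m)).filter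
        fun σ => σ.cycleOf a = c).card =
      (Finset.univ.filter fun τ : Perm {x : α // x ∉ c.support} =>
          τ.cycleType = m.erase c.support.card).card := by
  symm
  have hfix : ∀ (τ : Perm {x : α // x ∉ c.support}) (x : α), x ∈ c.support →
      ofSubtype τ x = x := fun τ x hx => ofSubtype_apply_of_not_mem τ (not_not_intro hx)
  have hdisj : ∀ τ : Perm {x : α // x ∉ c.support}, Perm.Disjoint c (ofSubtype τ) := by
    intro τ x
    by_cases hx : x ∈ c.support
    · exact Or.inr (hfix τ x hx)
    · exact Or.inl (notMem_support.mp hx)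
  apply Finset.card_bij (fun τ _ => c * ofSubtype τ)
  · -- maps to
    intro τ hτ
    rw [Finset.mem_filter] at hτ ⊢
    refine ⟨Finset.mem_filter.mpr ⟨Finset.mem_univ _, ?_⟩, ?_⟩
    · rw [Equiv.Perm.Disjoint.cycleType_mul (hdisj τ), hc.cycleType, cycleType_ofSubtype, hτ.2]
      rw [Multiset.singleton_add, Multiset.cons_erase hcm]
    · rw [cycleOf_mul_of_apply_right_eq_self (hdisj τ).commute _ (hfix τ a ha)]
      exact hc.cycleOf_eq (mem_support.mp ha)
  · -- injective
    intro τ₁ _ τ₂ _ h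
    have h' := mul_left_cancel h
    ext x
    have : ((τ₁ x : {x : α // x ∉ c.support}) : α) = ((τ₂ x : {x : α // x ∉ c.support}) : α) := by
      rw [← ofSubtype_apply_coe τ₁, ← ofSubtype_apply_coe τ₂, h']
    exact this
  · -- surjective
    intro σ hσ
    rw [Finset.mem_filter, Finset.mem_filter] at hσ
    obtain ⟨⟨-, hσct⟩, hσc⟩ := hσ
    have haσ : a ∈ σ.support := by
      rw [mem_support]
      intro h
      exact hc.ne_one (hσc ▸ (cycleOf_eq_one_iff σ).mpr h)
    have hmem : c ∈ σ.cycleFactorsFinset := hσc ▸ cycleOf_mem_cycleFactorsFinset_iff.mpr haσ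
    have hd : Perm.Disjoint (σ * c⁻¹) c := disjoint_mul_inv_of_mem_cycleFactorsFinset hmem
    set g := σ * c⁻¹ with hg
    have hgc : g * c = σ := by rw [hg, inv_mul_cancel_right]
    have hsupdisj : _root_.Disjoint g.support c.support := hd.disjoint_support
    have hfixg : ∀ x ∈ c.support, g x = x := fun x hx =>
      notMem_support.mp (Finset.disjoint_right.mp hsupdisj hx)
    have hstep : ∀ x : α, x ∉ c.support → g x ∉ c.support := by
      intro x hx
      by_cases hxg : x ∈ g.support
      · exact Finset.disjoint_left.mp hsupdisj (apply_mem_support.mpr hxg)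
      · rwa [notMem_support.mp hxg]
    have h₁ : ∀ x : α, x ∉ c.support ↔ g x ∉ c.support := by
      intro x
      refine ⟨hstep x, fun hgx => ?_⟩
      by_contra hx
      exact hgx (by rw [hfixg x hx]; exact hx)
    have h₂ : ∀ x : α, g x ≠ x → x ∉ c.support := by
      intro x hgx
      by_contra hx
      exact hgx (hfixg x hx)
    have hofs : ofSubtype (g.subtypePerm (p := fun x => x ∉ c.support) (fun x => (h₁ x).symm)) = g := ofSubtype_subtypePerm (fun x => (h₁ x).symm) h₂
    refine ⟨g.subtypePerm (p := fun x => x ∉ c.support) (fun x => (h₁ x).symm), Finset.mem_filter.mpr ⟨Finset.mem_univ _, ?_⟩, ?_⟩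
    · have hct : g.cycleType = (g.subtypePerm (p := fun x => x ∉ c.support) (fun x => (h₁ x).symm)).cycleType := by
        rw [← cycleType_ofSubtype (g := g.subtypePerm (p := fun x => x ∉ c.support) (fun x => (h₁ x).symm)), hofs]
      rw [← hct, ← hσct, ← hgc, Equiv.Perm.Disjoint.cycleType_mul hd, hc.cycleType,
        add_comm, Multiset.singleton_add, Multiset.erase_cons_head]
    · rw [hofs, ← hd.commute.eq, hgc]


theorem key : ∀ (n : ℕ) (α : Type) [Fintype α] [DecidableEq α] (m : Multiset ℕ),
    Fintype.card α = n → m.sum = n → (∀ i ∈ m, 2 ≤ i) →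
    (Finset.univ.filter fun σ : Perm α => σ.cycleType = m).card *
      (m.prod * ∏ j ∈ m.toFinset, (m.count j).factorial) = n.factorial := by
  intro n
  induction n using Nat.strong_induction_on with
  | _ n IH =>
  intro α _ _ m hcard hsum h2
  by_cases hm : m = 0
  · subst hm
    simp only [Multiset.sum_zero] at hsum
    subst hsum
    have : (Finset.univ.filter fun σ : Perm α => σ.cycleType = 0) = {1} := by
      ext σ
      simp [cycleType_eq_zero]
    rw [this]
    simp
  · -- m nonempty
    obtain ⟨ℓ₀, hℓ₀⟩ := Multiset.exists_mem_of_ne_zero hm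
    have hn : 0 < n := by
      have h1 : 2 ≤ ℓ₀ := h2 _ hℓ₀
      have h3 : ℓ₀ ≤ m.sum := Multiset.single_le_sum (fun x _ => Nat.zero_le x) _ hℓ₀
      omega
    have : Nonempty α := Fintype.card_pos_iff.mp (hcard ▸ hn)
    obtain ⟨a⟩ := this
    set D := Finset.univ.filter fun σ : Perm α => σ.cycleType = m with hD
    set C := Finset.univ.filter
      (fun c : Perm α => c.IsCycle ∧ a ∈ c.support ∧ c.support.card ∈ m) with hC
    -- every σ in D is supported everywhere
    have hsuppD : ∀ σ ∈ D, a ∈ σ.support := by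
      intro σ hσ
      rw [hD, Finset.mem_filter] at hσ
      have : σ.support = Finset.univ := by
        apply Finset.eq_univ_of_card
        rw [← sum_cycleType, hσ.2, hsum, hcard]
      rw [this]; exact Finset.mem_univ a
    have hmapsC : ∀ σ ∈ D, σ.cycleOf a ∈ C := by
      intro σ hσ
      have haσ := hsuppD σ hσ
      have hσct : σ.cycleType = m := (Finset.mem_filter.mp hσ).2
      rw [hC, Finset.mem_filter]
      refine ⟨Finset.mem_univ _, isCycle_cycleOf σ (mem_support.mp haσ), ?_, ?_⟩
      · exact mem_support_cycleOf_iff.mpr ⟨SameCycle.refl _ _, haσ⟩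
      · rw [← hσct, cycleType_def]
        exact Multiset.mem_map_of_mem _
          (cycleOf_mem_cycleFactorsFinset_iff.mpr haσ)
    have step1 : D.card = ∑ c ∈ C, (D.filter fun σ => σ.cycleOf a = c).card :=
      Finset.card_eq_sum_card_fiberwise hmapsC
    -- abbreviations
    set K : ℕ → ℕ := fun ℓ =>
      (m.erase ℓ).prod * ∏ j ∈ (m.erase ℓ).toFinset, ((m.erase ℓ).count j).factorial with hK
    set P : ℕ := m.prod * ∏ j ∈ m.toFinset, (m.count j).factorial with hP
    -- the denominator factorization
    have hPfact : ∀ ℓ ∈ m, P = ℓ * m.count ℓ * K ℓ := by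
      intro ℓ hℓ
      have hmemt : ℓ ∈ m.toFinset := Multiset.mem_toFinset.mpr hℓ
      have h1 : m.prod = ℓ * (m.erase ℓ).prod := (Multiset.prod_erase hℓ).symm
      have hcpos : 0 < m.count ℓ := Multiset.count_pos.mpr hℓ
      have h2' : (m.count ℓ).factorial
          = m.count ℓ * ((m.erase ℓ).count ℓ).factorial := by
        rw [Multiset.count_erase_self]
        exact (Nat.mul_factorial_pred hcpos.ne').symm
      have h3 : ∏ j ∈ (m.erase ℓ).toFinset, ((m.erase ℓ).count j).factorial
          = ∏ j ∈ m.toFinset, ((m.erase ℓ).count j).factorial := by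
        apply Finset.prod_subset
        · intro j hj
          exact Multiset.mem_toFinset.mpr
            (Multiset.mem_of_mem_erase (Multiset.mem_toFinset.mp hj))
        · intro j _ hj
          rw [Multiset.count_eq_zero.mpr (fun hmem => hj (Multiset.mem_toFinset.mpr hmem))]
          rfl
      have h4 : ∏ j ∈ m.toFinset, (m.count j).factorial
          = m.count ℓ * ∏ j ∈ m.toFinset, ((m.erase ℓ).count j).factorial := by
        rw [← Finset.mul_prod_erase _ _ hmemt, ← Finset.mul_prod_erase _
          (fun j => ((m.erase ℓ).count j).factorial) hmemt, h2']
        rw [mul_assoc]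
        congr 1
        congr 1
        apply Finset.prod_congr rfl
        intro j hj
        rw [Multiset.count_erase_of_ne (Finset.ne_of_mem_erase hj)]
      simp only [hP, hK]
      rw [h1, h4, ← h3]
      ring
    -- the fiber computation
    have hfib : ∀ c ∈ C, (D.filter fun σ => σ.cycleOf a = c).card * K c.support.card
        = (n - c.support.card).factorial := by
      intro c hcC
      rw [hC, Finset.mem_filter] at hcC
      obtain ⟨-, hcyc, hac, hcm⟩ := hcC
      have hl2 : 2 ≤ c.support.card := h2 _ hcm
      have hln : c.support.card ≤ n := by
        rw [← hsum]
        exact Multiset.single_le_sum (fun x _ => Nat.zero_le x) _ hcm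
      have hcard' : Fintype.card {x : α // x ∉ c.support} = n - c.support.card := by
        rw [Fintype.card_subtype_compl, hcard, Fintype.card_coe]
      rw [fiber_card a m c hcyc hac hcm]
      exact IH (n - c.support.card) (by omega) _ (m.erase c.support.card) hcard'
        (by
          have := Multiset.cons_erase hcm
          have hsum' : c.support.card + (m.erase c.support.card).sum = n := by
            rw [← hsum]; conv_rhs => rw [← this]
            rw [Multiset.sum_cons]
          omega)
        (fun i hi => h2 i (Multiset.mem_of_mem_erase hi))
    -- count the cycles through a of length ℓ
    have hcycles : ∀ ℓ ∈ m.toFinset, (C.filter fun c => c.support.card = ℓ).card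
        = (n - 1).descFactorial (ℓ - 1) := by
      intro ℓ hℓ
      have hℓm : ℓ ∈ m := Multiset.mem_toFinset.mp hℓ
      have : (C.filter fun c => c.support.card = ℓ)
          = Finset.univ.filter fun c : Perm α =>
              (c.IsCycle ∧ a ∈ c.support) ∧ c.support.card = ℓ := by
        ext c
        rw [Finset.mem_filter, hC, Finset.mem_filter, Finset.mem_filter]
        constructor
        · rintro ⟨⟨h1, h2', h3, _⟩, h5⟩
          exact ⟨h1, ⟨h2', h3⟩, h5⟩
        · rintro ⟨h1, ⟨h2', h3⟩, h5⟩
          exact ⟨⟨h1, h2', h3, h5 ▸ hℓm⟩, h5⟩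
      rw [this, card_cycles a ℓ (h2 _ hℓm), hcard]
    -- assemble
    have hsum2 : ∀ c ∈ C, c.support.card ∈ m.toFinset := by
      intro c hcC
      rw [hC, Finset.mem_filter] at hcC
      exact Multiset.mem_toFinset.mpr hcC.2.2.2
    calc D.card * P
        = ∑ c ∈ C, (D.filter fun σ => σ.cycleOf a = c).card * P := by
          rw [step1, Finset.sum_mul]
      _ = ∑ c ∈ C, c.support.card * m.count c.support.card * (n - c.support.card).factorial := by
          apply Finset.sum_congr rfl
          intro c hcC
          have hcm : c.support.card ∈ m := Multiset.mem_toFinset.mp (hsum2 c hcC)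
          rw [hPfact _ hcm,
            show ∀ x y z w : ℕ, x * (y * z * w) = y * z * (x * w) from
              fun _ _ _ _ => by ring,
            hfib c hcC]
      _ = ∑ ℓ ∈ m.toFinset, ∑ c ∈ C.filter (fun c => c.support.card = ℓ),
            c.support.card * m.count c.support.card * (n - c.support.card).factorial := by
          rw [Finset.sum_fiberwise_of_maps_to hsum2]
      _ = ∑ ℓ ∈ m.toFinset, (n - 1).descFactorial (ℓ - 1)
            * (ℓ * m.count ℓ * (n - ℓ).factorial) := by
          apply Finset.sum_congr rfl
          intro ℓ hℓ
          rw [Finset.sum_congr rfl (fun c hc => by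
            rw [(Finset.mem_filter.mp hc).2])]
          rw [Finset.sum_const, hcycles ℓ hℓ, smul_eq_mul]
      _ = ∑ ℓ ∈ m.toFinset, m.count ℓ * ℓ * (n - 1).factorial := by
          apply Finset.sum_congr rfl
          intro ℓ hℓ
          have hℓm : ℓ ∈ m := Multiset.mem_toFinset.mp hℓ
          have hl2 : 2 ≤ ℓ := h2 _ hℓm
          have hln : ℓ ≤ n := by
            rw [← hsum]
            exact Multiset.single_le_sum (fun x _ => Nat.zero_le x) _ hℓm
          have hdesc : (n - 1).descFactorial (ℓ - 1) * (n - ℓ).factorial = (n - 1).factorial := by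
            have := Nat.factorial_mul_descFactorial (n := n - 1) (k := ℓ - 1) (by omega)
            rw [show n - 1 - (ℓ - 1) = n - ℓ by omega] at this
            rw [mul_comm] at this
            exact this
          calc (n - 1).descFactorial (ℓ - 1) * (ℓ * m.count ℓ * (n - ℓ).factorial)
              = (ℓ * m.count ℓ) * ((n - 1).descFactorial (ℓ - 1) * (n - ℓ).factorial) := by ring
            _ = m.count ℓ * ℓ * (n - 1).factorial := by rw [hdesc]; ring
      _ = (∑ ℓ ∈ m.toFinset, m.count ℓ * ℓ) * (n - 1).factorial := by
          rw [Finset.sum_mul]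
      _ = n * (n - 1).factorial := by
          congr 1
          have := Finset.sum_multiset_map_count m (id : ℕ → ℕ)
          rw [Multiset.map_id] at this
          rw [← hsum, this]
          apply Finset.sum_congr rfl
          intro ℓ _
          rw [smul_eq_mul]; rfl
      _ = n.factorial := Nat.mul_factorial_pred hn.ne'


end AuxiliaryCycleCounting

open Equiv Equiv.Perm Finset

/-- Corollary 3.6 of the paper: the derangement-indexed sum of Theorem 3.4 equals the
partition-indexed sum, where a derangement with cycle type `p` contributes the weight
`(k+1)! / ((∏_{i ∈ p} i) · ∏_j V_p(j)!)` for each partition `p` of `k+1` into parts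
of size at least `2`. -/
theorem derangement_sum_eq_partition_sum (k : ℕ) (hk : 1 ≤ k) :
    (∑ σ ∈ Finset.univ.filter (fun σ : Equiv.Perm (Fin (k + 1)) => ∀ i, σ i ≠ i),
        (σ.cycleType.map fun ℓ => (k : ℚ) ^ ℓ + (-1) ^ (ℓ + 1)).prod) =
      ∑ p ∈ Finset.univ.filter (fun p : Nat.Partition (k + 1) => ∀ i ∈ p.parts, 2 ≤ i),
        (((k + 1).factorial : ℚ) /
            ((p.parts.prod : ℚ) *
              ∏ j ∈ p.parts.toFinset, ((p.parts.count j).factorial : ℚ))) *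
          (p.parts.map fun i => (k : ℚ) ^ i + (-1) ^ (i + 1)).prod := by
  classical
  -- the cycle type of a derangement, as a partition
  set g : Equiv.Perm (Fin (k + 1)) → Nat.Partition (k + 1) := fun σ =>
    if h : σ.cycleType.sum = k + 1 then
      ⟨σ.cycleType, fun hi => lt_of_lt_of_le two_pos (Equiv.Perm.two_le_of_mem_cycleType hi), h⟩
    else ⟨Multiset.replicate (k + 1) 1, fun hi => by
        rw [Multiset.eq_of_mem_replicate hi]; norm_num, by simp [Multiset.sum_replicate]; omega⟩ with hg
  have hder : ∀ σ : Equiv.Perm (Fin (k + 1)), (∀ i, σ i ≠ i) ↔ σ.cycleType.sum = k + 1 := by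
    intro σ
    rw [Equiv.Perm.sum_cycleType]
    constructor
    · intro h
      have : σ.support = Finset.univ := by
        apply Finset.eq_univ_of_forall
        intro i; exact Equiv.Perm.mem_support.mpr (h i)
      rw [this, Finset.card_univ, Fintype.card_fin]
    · intro h i
      have : σ.support = Finset.univ :=
        Finset.eq_univ_of_card _ (by rw [h, Fintype.card_fin])
      exact Equiv.Perm.mem_support.mp (this ▸ Finset.mem_univ i)
  have hgparts : ∀ σ : Equiv.Perm (Fin (k + 1)), (∀ i, σ i ≠ i) →
      (g σ).parts = σ.cycleType := by
    intro σ h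
    rw [hg]
    simp only [(hder σ).mp h, dif_pos]
  have hmaps : ∀ σ ∈ Finset.univ.filter (fun σ : Equiv.Perm (Fin (k + 1)) => ∀ i, σ i ≠ i),
      g σ ∈ Finset.univ.filter (fun p : Nat.Partition (k + 1) => ∀ i ∈ p.parts, 2 ≤ i) := by
    intro σ hσ
    rw [Finset.mem_filter] at hσ ⊢
    refine ⟨Finset.mem_univ _, ?_⟩
    rw [hgparts σ hσ.2]
    exact fun i hi => Equiv.Perm.two_le_of_mem_cycleType hi
  rw [← Finset.sum_fiberwise_of_maps_to hmaps]
  apply Finset.sum_congr rfl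
  intro p hp
  rw [Finset.mem_filter] at hp
  have hfiber : (Finset.univ.filter (fun σ : Equiv.Perm (Fin (k + 1)) => ∀ i, σ i ≠ i)).filter
      (fun σ => g σ = p)
      = Finset.univ.filter (fun σ : Equiv.Perm (Fin (k + 1)) => σ.cycleType = p.parts) := by
    ext σ
    simp only [Finset.mem_filter, Finset.mem_univ, true_and]
    constructor
    · rintro ⟨h1, h2⟩
      rw [← hgparts σ h1, h2]
    · intro h1
      have hsum : σ.cycleType.sum = k + 1 := by rw [h1, p.parts_sum]
      have hd : ∀ i, σ i ≠ i := (hder σ).mpr hsum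
      refine ⟨hd, ?_⟩
      apply Nat.Partition.ext
      rw [hgparts σ hd, h1]
    
  rw [hfiber]
  have hkey := key (k + 1) (Fin (k + 1)) p.parts (by simp) p.parts_sum hp.2
  have hcast : ((Finset.univ.filter
        (fun σ : Equiv.Perm (Fin (k + 1)) => σ.cycleType = p.parts)).card : ℚ) *
      ((p.parts.prod : ℚ) * ∏ j ∈ p.parts.toFinset, ((p.parts.count j).factorial : ℚ))
      = ((k + 1).factorial : ℚ) := by
    rw [← hkey]
    push_cast
    ring
  have hne : ((p.parts.prod : ℚ) * ∏ j ∈ p.parts.toFinset, ((p.parts.count j).factorial : ℚ)) ≠ 0 := by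
    apply mul_ne_zero
    · rw [Nat.cast_ne_zero]
      intro h0
      have h0' : (0 : ℕ) ∈ p.parts := Multiset.prod_eq_zero_iff.mp h0
      exact absurd (hp.2 _ h0') (by omega)
    · apply Finset.prod_ne_zero_iff.mpr
      intro j _
      exact_mod_cast (Nat.factorial_pos _).ne'
  have hweight : (((k + 1).factorial : ℚ) /
      ((p.parts.prod : ℚ) * ∏ j ∈ p.parts.toFinset, ((p.parts.count j).factorial : ℚ)))
      = ((Finset.univ.filter
          (fun σ : Equiv.Perm (Fin (k + 1)) => σ.cycleType = p.parts)).card : ℚ) := by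
    rw [eq_comm, eq_div_iff hne]
    exact hcast
  rw [hweight]
  have hconst : ∀ σ ∈ Finset.univ.filter
      (fun σ : Equiv.Perm (Fin (k + 1)) => σ.cycleType = p.parts),
      (σ.cycleType.map fun ℓ => (k : ℚ) ^ ℓ + (-1) ^ (ℓ + 1)).prod
        = (p.parts.map fun i => (k : ℚ) ^ i + (-1) ^ (i + 1)).prod := by
    intro σ hσ
    rw [(Finset.mem_filter.mp hσ).2]
  rw [Finset.sum_congr rfl hconst, Finset.sum_const, nsmul_eq_mul]
end

section
/- Define, for each natural number k ≥ 1, S(k) = ∑_{σ} ∏_{ℓ ∈ cycleType(σ)} ((k:ℝ)^ℓ + (−1)^{ℓ+1}), where the sum runs over all derangements σ of Fin (k+1). Then S(k) is asymptotic to (k+1)! · k^{k+1} / e; that is, the sequence S(k) / ((k+1)! · k^{k+1}) tends to 1/e (= exp(−1)) as k → ∞. -/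
open Filter

private lemma myProdMapLe (f g : ℕ → ℝ) (m : Multiset ℕ)
    (h0 : ∀ ℓ ∈ m, 0 ≤ f ℓ) (h : ∀ ℓ ∈ m, f ℓ ≤ g ℓ) :
    (m.map f).prod ≤ (m.map g).prod := by
  induction m using Multiset.induction with
  | empty => simp
  | cons a s ih =>
    simp only [Multiset.map_cons, Multiset.prod_cons]
    have hfa := h0 a (Multiset.mem_cons_self a s)
    have hprod : 0 ≤ (s.map f).prod := by
      apply Multiset.prod_nonneg
      intro x hx
      obtain ⟨y, hy, rfl⟩ := Multiset.mem_map.mp hx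
      exact h0 y (Multiset.mem_cons_of_mem hy)
    have h1 := ih (fun ℓ hℓ => h0 ℓ (Multiset.mem_cons_of_mem hℓ))
      (fun ℓ hℓ => h ℓ (Multiset.mem_cons_of_mem hℓ))
    have := h a (Multiset.mem_cons_self a s)
    nlinarith

private lemma myProdMapPow (k : ℝ) (m : Multiset ℕ) :
    (m.map fun ℓ => k ^ ℓ).prod = k ^ m.sum := by
  induction m using Multiset.induction with
  | empty => simp
  | cons a s ih => simp [ih, pow_add]

private lemma myCardLeSum (m : Multiset ℕ) (h : ∀ ℓ ∈ m, 1 ≤ ℓ) :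
    Multiset.card m ≤ m.sum := by
  induction m using Multiset.induction with
  | empty => simp
  | cons a s ih =>
    simp only [Multiset.card_cons, Multiset.sum_cons]
    have := h a (Multiset.mem_cons_self a s)
    have := ih (fun ℓ hℓ => h ℓ (Multiset.mem_cons_of_mem hℓ))
    omega

private lemma tendsto_aux : Tendsto (fun k : ℕ => ((k : ℝ) + 1) / (k : ℝ) ^ 2)
    atTop (nhds 0) := by
  have h1 : Tendsto (fun k : ℕ => 1 / (k : ℝ)) atTop (nhds 0) :=
    tendsto_one_div_atTop_nhds_zero_nat
  have h2 : Tendsto (fun k : ℕ => 1 / (k : ℝ) + 1 / (k : ℝ) * (1 / (k : ℝ)))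
      atTop (nhds 0) := by
    have := h1.add (h1.mul h1)
    simpa using this
  apply h2.congr'
  filter_upwards [eventually_ge_atTop 1] with k hk
  have hk0 : (k : ℝ) ≠ 0 := Nat.cast_ne_zero.mpr (by omega)
  rw [eq_div_iff (by positivity)]
  field_simp

/-- `(1 - 1/k²)^(k+1) → 1` -/
private lemma tendsto_low : Tendsto (fun k : ℕ => (1 - 1 / (k : ℝ) ^ 2) ^ (k + 1))
    atTop (nhds 1) := by
  have hlow : Tendsto (fun k : ℕ => 1 - ((k : ℝ) + 1) / (k : ℝ) ^ 2) atTop (nhds 1) := by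
    have := (tendsto_const_nhds (x := (1:ℝ)) (f := atTop (α := ℕ))).sub tendsto_aux
    simpa using this
  apply tendsto_of_tendsto_of_tendsto_of_le_of_le' hlow tendsto_const_nhds
  · filter_upwards [eventually_ge_atTop 1] with k hk
    have hk1 : (1:ℝ) ≤ (k:ℝ) := by exact_mod_cast hk
    have hk0 : (0:ℝ) < (k : ℝ) ^ 2 := by positivity
    have h2 : (-2 : ℝ) ≤ -(1 / (k : ℝ) ^ 2) := by
      have : 1 / (k : ℝ) ^ 2 ≤ 1 := by
        rw [div_le_one hk0]; nlinarith
      linarith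
    have := one_add_mul_le_pow h2 (k + 1)
    calc 1 - ((k : ℝ) + 1) / (k : ℝ) ^ 2 = 1 + (↑(k+1) : ℝ) * (-(1 / (k : ℝ) ^ 2)) := by
          push_cast; field_simp; ring
      _ ≤ (1 + -(1 / (k : ℝ) ^ 2)) ^ (k + 1) := this
      _ = (1 - 1 / (k : ℝ) ^ 2) ^ (k + 1) := by ring_nf
  · filter_upwards [eventually_ge_atTop 1] with k hk
    have hk1 : (1:ℝ) ≤ (k:ℝ) := by exact_mod_cast hk
    have h1 : 1 - 1 / (k : ℝ) ^ 2 ≤ 1 := by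
      have : (0:ℝ) ≤ 1 / (k : ℝ) ^ 2 := by positivity
      linarith
    have h0 : (0:ℝ) ≤ 1 - 1 / (k : ℝ) ^ 2 := by
      have : 1 / (k : ℝ) ^ 2 ≤ 1 := by
        rw [div_le_one (by positivity)]; nlinarith
      linarith
    exact pow_le_one₀ h0 h1

/-- `(1 + 1/k²)^(k+1) → 1` -/
private lemma tendsto_high : Tendsto (fun k : ℕ => (1 + 1 / (k : ℝ) ^ 2) ^ (k + 1))
    atTop (nhds 1) := by
  have hhigh : Tendsto (fun k : ℕ => Real.exp (((k : ℝ) + 1) / (k : ℝ) ^ 2))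
      atTop (nhds 1) := by
    have := (Real.continuous_exp.tendsto 0).comp tendsto_aux
    simpa [Function.comp_def] using this
  apply tendsto_of_tendsto_of_tendsto_of_le_of_le' tendsto_const_nhds hhigh
  · filter_upwards with k
    apply one_le_pow₀
    have : (0:ℝ) ≤ 1 / (k : ℝ) ^ 2 := by positivity
    linarith
  · filter_upwards [eventually_ge_atTop 1] with k hk
    have h1 : 1 + 1 / (k : ℝ) ^ 2 ≤ Real.exp (1 / (k : ℝ) ^ 2) := by
      have := Real.add_one_le_exp (1 / (k : ℝ) ^ 2)
      linarith
    calc (1 + 1 / (k : ℝ) ^ 2) ^ (k + 1) ≤ (Real.exp (1 / (k : ℝ) ^ 2)) ^ (k + 1) := by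
          apply pow_le_pow_left₀ (by positivity) h1
      _ = Real.exp (((k : ℝ) + 1) / (k : ℝ) ^ 2) := by
          rw [← Real.exp_nat_mul]
          congr 1
          push_cast
          ring

private lemma mainBound (k : ℕ) (hk : 1 ≤ k) :
    ((Finset.univ.filter (fun σ : Equiv.Perm (Fin (k + 1)) => ∀ i, σ i ≠ i)).card : ℝ)
        / (k + 1).factorial * (1 - 1 / (k : ℝ) ^ 2) ^ (k + 1)
      ≤ (∑ σ ∈ Finset.univ.filter (fun σ : Equiv.Perm (Fin (k + 1)) => ∀ i, σ i ≠ i),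
            (σ.cycleType.map fun ℓ => (k : ℝ) ^ ℓ + (-1) ^ (ℓ + 1)).prod) /
          (((k + 1).factorial : ℝ) * (k : ℝ) ^ (k + 1)) ∧
    (∑ σ ∈ Finset.univ.filter (fun σ : Equiv.Perm (Fin (k + 1)) => ∀ i, σ i ≠ i),
            (σ.cycleType.map fun ℓ => (k : ℝ) ^ ℓ + (-1) ^ (ℓ + 1)).prod) /
          (((k + 1).factorial : ℝ) * (k : ℝ) ^ (k + 1))
      ≤ ((Finset.univ.filter (fun σ : Equiv.Perm (Fin (k + 1)) => ∀ i, σ i ≠ i)).card : ℝ)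
        / (k + 1).factorial * (1 + 1 / (k : ℝ) ^ 2) ^ (k + 1) := by
  set D := Finset.univ.filter (fun σ : Equiv.Perm (Fin (k + 1)) => ∀ i, σ i ≠ i) with hD
  have hk0 : (0:ℝ) < (k:ℝ) := by exact_mod_cast hk
  have hk1 : (1:ℝ) ≤ (k:ℝ) := by exact_mod_cast hk
  have hfac : (0:ℝ) < ((k + 1).factorial : ℝ) := by exact_mod_cast (k+1).factorial_pos
  have hkpow : (0:ℝ) < (k:ℝ) ^ (k+1) := by positivity
  have hsq : 1 / (k : ℝ) ^ 2 ≤ 1 := by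
    rw [div_le_one (by positivity)]; nlinarith
  have hpos : (0:ℝ) ≤ 1 / (k : ℝ) ^ 2 := by positivity
  have key : ∀ σ ∈ D,
      (k:ℝ) ^ (k+1) * (1 - 1 / (k : ℝ) ^ 2) ^ (k + 1)
        ≤ (σ.cycleType.map fun ℓ => (k : ℝ) ^ ℓ + (-1) ^ (ℓ + 1)).prod ∧
      (σ.cycleType.map fun ℓ => (k : ℝ) ^ ℓ + (-1) ^ (ℓ + 1)).prod
        ≤ (k:ℝ) ^ (k+1) * (1 + 1 / (k : ℝ) ^ 2) ^ (k + 1) := by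
    intro σ hσ
    rw [hD, Finset.mem_filter] at hσ
    have hsupp : σ.support = Finset.univ := by
      apply Finset.eq_univ_iff_forall.mpr
      intro i
      exact Equiv.Perm.mem_support.mpr (hσ.2 i)
    have hsum : σ.cycleType.sum = k + 1 := by
      rw [Equiv.Perm.sum_cycleType, hsupp, Finset.card_univ, Fintype.card_fin]
    have hmem : ∀ ℓ ∈ σ.cycleType, 2 ≤ ℓ := fun ℓ hℓ =>
      Equiv.Perm.two_le_of_mem_cycleType hℓ
    have hfact : ∀ ℓ ∈ σ.cycleType,
        (k : ℝ) ^ ℓ + (-1) ^ (ℓ + 1)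
          = (k : ℝ) ^ ℓ * (1 + (-1 : ℝ) ^ (ℓ + 1) / (k : ℝ) ^ ℓ) := by
      intro ℓ _
      have : (k:ℝ) ^ ℓ ≠ 0 := by positivity
      field_simp
    have hrw : (σ.cycleType.map fun ℓ => (k : ℝ) ^ ℓ + (-1) ^ (ℓ + 1)).prod
        = (k:ℝ) ^ (k+1)
          * (σ.cycleType.map fun ℓ => 1 + (-1 : ℝ) ^ (ℓ + 1) / (k : ℝ) ^ ℓ).prod := by
      rw [Multiset.map_congr rfl hfact, Multiset.prod_map_mul, myProdMapPow, hsum]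
    have heps : ∀ ℓ ∈ σ.cycleType,
        1 - 1 / (k : ℝ) ^ 2 ≤ 1 + (-1 : ℝ) ^ (ℓ + 1) / (k : ℝ) ^ ℓ ∧
        1 + (-1 : ℝ) ^ (ℓ + 1) / (k : ℝ) ^ ℓ ≤ 1 + 1 / (k : ℝ) ^ 2 := by
      intro ℓ hℓ
      have h2 := hmem ℓ hℓ
      have habs : |(-1 : ℝ) ^ (ℓ + 1) / (k : ℝ) ^ ℓ| ≤ 1 / (k : ℝ) ^ 2 := by
        rw [abs_div, abs_pow, abs_neg, abs_one, one_pow, abs_pow, abs_of_pos hk0]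
        apply one_div_le_one_div_of_le (by positivity)
        exact pow_le_pow_right₀ hk1 h2
      constructor
      · have := (abs_le.mp habs).1; linarith
      · have := (abs_le.mp habs).2; linarith
    have hnn : ∀ ℓ ∈ σ.cycleType, (0:ℝ) ≤ 1 - 1 / (k : ℝ) ^ 2 := fun _ _ => by linarith
    have hcardle : Multiset.card σ.cycleType ≤ k + 1 := by
      have := myCardLeSum σ.cycleType (fun ℓ hℓ => by have := hmem ℓ hℓ; omega)
      omega
    constructor
    · rw [hrw]
      apply mul_le_mul_of_nonneg_left _ (le_of_lt hkpow)
      calc (1 - 1 / (k : ℝ) ^ 2) ^ (k + 1)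
          ≤ (1 - 1 / (k : ℝ) ^ 2) ^ (Multiset.card σ.cycleType) :=
            pow_le_pow_of_le_one (by linarith) (by linarith) hcardle
        _ = (σ.cycleType.map fun _ => 1 - 1 / (k : ℝ) ^ 2).prod := by
            rw [Multiset.map_const', Multiset.prod_replicate]
        _ ≤ (σ.cycleType.map fun ℓ => 1 + (-1 : ℝ) ^ (ℓ + 1) / (k : ℝ) ^ ℓ).prod :=
            myProdMapLe _ _ _ hnn (fun ℓ hℓ => (heps ℓ hℓ).1)
    · rw [hrw]
      apply mul_le_mul_of_nonneg_left _ (le_of_lt hkpow)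
      calc (σ.cycleType.map fun ℓ => 1 + (-1 : ℝ) ^ (ℓ + 1) / (k : ℝ) ^ ℓ).prod
          ≤ (σ.cycleType.map fun _ => 1 + 1 / (k : ℝ) ^ 2).prod :=
            myProdMapLe _ _ _ (fun ℓ hℓ => by have := (heps ℓ hℓ).1; linarith)
              (fun ℓ hℓ => (heps ℓ hℓ).2)
        _ = (1 + 1 / (k : ℝ) ^ 2) ^ (Multiset.card σ.cycleType) := by
            rw [Multiset.map_const', Multiset.prod_replicate]
        _ ≤ (1 + 1 / (k : ℝ) ^ 2) ^ (k + 1) :=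
            pow_le_pow_right₀ (by linarith) hcardle
  have hsumlo : (D.card : ℝ) * ((k:ℝ) ^ (k+1) * (1 - 1 / (k : ℝ) ^ 2) ^ (k + 1))
      ≤ ∑ σ ∈ D, (σ.cycleType.map fun ℓ => (k : ℝ) ^ ℓ + (-1) ^ (ℓ + 1)).prod := by
    have := Finset.card_nsmul_le_sum D
      (fun σ => (σ.cycleType.map fun ℓ => (k : ℝ) ^ ℓ + (-1) ^ (ℓ + 1)).prod)
      ((k:ℝ) ^ (k+1) * (1 - 1 / (k : ℝ) ^ 2) ^ (k + 1))
      (fun σ hσ => (key σ hσ).1)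
    simpa [nsmul_eq_mul] using this
  have hsumhi : (∑ σ ∈ D, (σ.cycleType.map fun ℓ => (k : ℝ) ^ ℓ + (-1) ^ (ℓ + 1)).prod)
      ≤ (D.card : ℝ) * ((k:ℝ) ^ (k+1) * (1 + 1 / (k : ℝ) ^ 2) ^ (k + 1)) := by
    have := Finset.sum_le_card_nsmul D
      (fun σ => (σ.cycleType.map fun ℓ => (k : ℝ) ^ ℓ + (-1) ^ (ℓ + 1)).prod)
      ((k:ℝ) ^ (k+1) * (1 + 1 / (k : ℝ) ^ 2) ^ (k + 1))
      (fun σ hσ => (key σ hσ).2)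
    simpa [nsmul_eq_mul] using this
  have hden : (0:ℝ) < ((k + 1).factorial : ℝ) * (k : ℝ) ^ (k + 1) := by positivity
  constructor
  · rw [le_div_iff₀ hden]
    calc (D.card : ℝ) / (k + 1).factorial * (1 - 1 / (k : ℝ) ^ 2) ^ (k + 1)
          * (((k + 1).factorial : ℝ) * (k : ℝ) ^ (k + 1))
        = (D.card : ℝ) * ((k:ℝ) ^ (k+1) * (1 - 1 / (k : ℝ) ^ 2) ^ (k + 1)) := by
          field_simp
      _ ≤ _ := hsumlo
  · rw [div_le_iff₀ hden]
    calc (∑ σ ∈ D, (σ.cycleType.map fun ℓ => (k : ℝ) ^ ℓ + (-1) ^ (ℓ + 1)).prod)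
        ≤ (D.card : ℝ) * ((k:ℝ) ^ (k+1) * (1 + 1 / (k : ℝ) ^ 2) ^ (k + 1)) := hsumhi
      _ = (D.card : ℝ) / (k + 1).factorial * (1 + 1 / (k : ℝ) ^ 2) ^ (k + 1)
          * (((k + 1).factorial : ℝ) * (k : ℝ) ^ (k + 1)) := by
          field_simp

/-- Asymptotics from the proof of Theorem 3.9: the derangement sum
`S(k) = ∑_{σ ∈ 𝔇_{k+1}} ∏_{ℓ ∈ cycleType σ} (k^ℓ + (−1)^{ℓ+1})` satisfies
`S(k) / ((k+1)! · k^{k+1}) → 1/e` as `k → ∞`. -/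
theorem derangement_sum_asymptotics :
    Filter.Tendsto
      (fun k : ℕ =>
        (∑ σ ∈ Finset.univ.filter (fun σ : Equiv.Perm (Fin (k + 1)) => ∀ i, σ i ≠ i),
            (σ.cycleType.map fun ℓ => (k : ℝ) ^ ℓ + (-1) ^ (ℓ + 1)).prod) /
          (((k + 1).factorial : ℝ) * (k : ℝ) ^ (k + 1)))
      Filter.atTop (nhds (Real.exp (-1))) := by
  have hcard : ∀ k : ℕ,
      (Finset.univ.filter (fun σ : Equiv.Perm (Fin (k + 1)) => ∀ i, σ i ≠ i)).card
        = numDerangements (k + 1) := by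
    intro k
    rw [← card_derangements_fin_eq_numDerangements, ← Fintype.card_subtype]
    exact Fintype.card_congr (Equiv.subtypeEquivRight (fun σ => Iff.rfl))
  have hD : Tendsto (fun k : ℕ => (numDerangements (k + 1) : ℝ) / (k + 1).factorial)
      atTop (nhds (Real.exp (-1))) :=
    numDerangements_tendsto_inv_e.comp (tendsto_add_atTop_nat 1)
  have hlow : Tendsto (fun k : ℕ => (numDerangements (k + 1) : ℝ) / (k + 1).factorial
      * (1 - 1 / (k : ℝ) ^ 2) ^ (k + 1)) atTop (nhds (Real.exp (-1))) := by
    have := hD.mul tendsto_low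
    simpa using this
  have hhigh : Tendsto (fun k : ℕ => (numDerangements (k + 1) : ℝ) / (k + 1).factorial
      * (1 + 1 / (k : ℝ) ^ 2) ^ (k + 1)) atTop (nhds (Real.exp (-1))) := by
    have := hD.mul tendsto_high
    simpa using this
  apply tendsto_of_tendsto_of_tendsto_of_le_of_le' hlow hhigh
  · filter_upwards [eventually_ge_atTop 1] with k hk
    have h1 := (mainBound k hk).1
    rw [hcard k] at h1
    exact h1
  · filter_upwards [eventually_ge_atTop 1] with k hk
    have h2 := (mainBound k hk).2
    rw [hcard k] at h2
    exact h2
end
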